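/- arXiv:1409.6961 — 8 statements merged into one kernel-verified Lean document; each statement's English description precedes it below -/
import Mathlib

section
/- Let q be a power of a prime, m a positive integer, and N a positive divisor of q - 1 such that N is coprime to Q = (q^m - 1)/(q - 1). Then the number of N-free elements ξ ∈ F_{q^m} with Tr_{F_{q^m}/F_q}(ξ) = 0 is Z_{q,m,N}(0) = (φ(N)/N)·(q^{m-1} - 1). -/
open scoped BigOperators
open scoped Classical

/-- The canonical additive character of a finite field `F` of characteristic `p`:
`z ↦ exp(2πi·Tr_{F/F_p}(z)/p)`. -/
noncomputable def canChar (p : ℕ) (F : Type) [Field F] [Fintype F] [CharP F p] : F → ℂ :=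
  fun z => Complex.exp (2 * Real.pi * Complex.I *
    (((@Algebra.trace (ZMod p) F _ _ (ZMod.algebra F p)) z).val : ℂ) / (p : ℂ))

/-- The Gaussian period `η_k^{(d, #L)}` attached to a generator `α` of `Lˣ`:
the sum of `χ` over the cyclotomic class `α^k⟨α^d⟩`. -/
noncomputable def gaussPeriod (p : ℕ) (L : Type) [Field L] [Fintype L] [CharP L p]
    (α : Lˣ) (d : ℕ) (k : ℤ) : ℂ :=
  ∑ x ∈ Finset.univ.filter (fun x : Lˣ => ∃ i : ℕ, x = α ^ k * (α ^ d) ^ i),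
    canChar p L (x : L)

/-- `Δ_k(N) = ∑_{d ∣ N} μ(d)·η_k^{(d, #L)}`. -/
noncomputable def DeltaSum (p : ℕ) (L : Type) [Field L] [Fintype L] [CharP L p]
    (α : Lˣ) (N : ℕ) (k : ℤ) : ℂ :=
  ∑ d ∈ N.divisors, ((ArithmeticFunction.moebius d : ℤ) : ℂ) * gaussPeriod p L α d k

/-- `ξ` is `N`-free (w.r.t. the fixed generator `α`): `ξ = α^k` for some `k` coprime to `N`. -/
def IsNFree {G : Type} [Group G] (α ξ : G) (N : ℕ) : Prop :=
  ∃ k : ℕ, Nat.Coprime k N ∧ ξ = α ^ k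

/-- `Z_{q,m,N}(c)`: the number of `N`-free elements of `Lˣ` with trace (to `K`) equal to `c`. -/
noncomputable def Zcount (K L : Type) [Field K] [Field L] [Algebra K L]
    (α : Lˣ) (N : ℕ) (c : K) : ℕ :=
  {ξ : Lˣ | IsNFree α ξ N ∧ Algebra.trace K L (ξ : L) = c}.ncard

/-- `P_{q,m,N}(c)`: the number of elements of `Lˣ` of multiplicative order exactly `N`
with trace (to `K`) equal to `c`. -/
noncomputable def Pcount (K L : Type) [Field K] [Field L] [Algebra K L]
    (N : ℕ) (c : K) : ℕ :=
  {ξ : Lˣ | orderOf ξ = N ∧ Algebra.trace K L (ξ : L) = c}.ncard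

/-- The radical of `n`: the product of the distinct prime factors of `n`. -/
def Rad (n : ℕ) : ℕ := ∏ ℓ ∈ n.primeFactors, ℓ

/-- `f_k(N, c, Δ) = ∑_{i=0}^{q-2} conj(χ_q(β^i·c))·Δ_{Qi+k}(N)`, where `β ∈ K` corresponds
to `α^Q` (a generator of `Kˣ`). -/
noncomputable def fsum (p : ℕ) (K L : Type) [Field K] [Fintype K] [CharP K p]
    [Field L] [Fintype L] [CharP L p]
    (α : Lˣ) (β : K) (q Q N : ℕ) (c : K) (k : ℤ) : ℂ :=
  ∑ i ∈ Finset.range (q - 1),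
    (starRingEnd ℂ) (canChar p K (β ^ i * c)) * DeltaSum p L α N ((Q * i : ℕ) + k)

open Polynomial

lemma traceZeroCount (K L : Type) [Field K] [Fintype K] [Field L] [Fintype L] [Algebra K L] :
    (Finset.univ.filter (fun x : L => Algebra.trace K L x = 0)).card * Fintype.card K
      = Fintype.card L := by
  haveI : Module.Finite K L := Module.Finite.of_finite
  have hsurj : Function.Surjective (Algebra.trace K L) := Algebra.trace_surjective K L
  set f := (Algebra.trace K L).toAddMonoidHom with hf
  have hsurj' : Function.Surjective f := hsurj
  have h1 : Nat.card (L ⧸ f.ker) = Nat.card K :=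
    Nat.card_congr (QuotientAddGroup.quotientKerEquivOfSurjective f hsurj').toEquiv
  have h2 := AddSubgroup.card_eq_card_quotient_mul_card_addSubgroup f.ker
  have h3 : Nat.card f.ker = (Finset.univ.filter (fun x : L => Algebra.trace K L x = 0)).card := by
    rw [Nat.card_eq_fintype_card, ← Fintype.card_subtype]
    exact Fintype.card_congr (Equiv.subtypeEquivRight (fun x => f.mem_ker))
  rw [← h3, Nat.mul_comm, ← Nat.card_eq_fintype_card (α := K), ← h1, ← h2,
    Nat.card_eq_fintype_card]

lemma memAlgebraMap (q : ℕ) (hq2 : 2 ≤ q) (K L : Type) [Field K] [Fintype K] [Field L] [Fintype L]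
    [Algebra K L] (hK : Fintype.card K = q) (x : L) (hx : x ^ (q - 1) = 1) :
    ∃ c : Kˣ, algebraMap K L c = x := by
  set f : L[X] := X ^ (q - 1) - C 1 with hf
  have hq1 : 0 < q - 1 := by omega
  have hfne : f ≠ 0 := by
    intro h
    have := congrArg (fun g => Polynomial.coeff g (q-1)) h
    simp only [hf, Polynomial.coeff_sub, Polynomial.coeff_X_pow, Polynomial.coeff_zero,
      Polynomial.coeff_C, if_pos rfl, if_neg (by omega : ¬ q - 1 = 0)] at this
    norm_num at this
  have hdeg : f.natDegree = q - 1 := by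
    rw [hf]
    have : (C (1:L)).natDegree < (X ^ (q-1) : L[X]).natDegree := by
      simp [Polynomial.natDegree_X_pow]; omega
    rw [Polynomial.natDegree_sub_eq_left_of_natDegree_lt this, Polynomial.natDegree_X_pow]
  set R : Finset L := f.roots.toFinset with hR
  have hcardR : R.card ≤ q - 1 := by
    calc R.card ≤ Multiset.card f.roots := f.roots.toFinset_card_le
    _ ≤ f.natDegree := f.card_roots'
    _ = q - 1 := hdeg
  have hroot : ∀ y : L, y ^ (q-1) = 1 → y ∈ R := by
    intro y hy
    rw [hR, Multiset.mem_toFinset, Polynomial.mem_roots hfne]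
    simp [hf, Polynomial.IsRoot, hy]
  set T : Finset L := Finset.univ.image (fun c : Kˣ => algebraMap K L c) with hT
  have hTR : T ⊆ R := by
    intro y hy
    rw [hT, Finset.mem_image] at hy
    obtain ⟨c, _, rfl⟩ := hy
    apply hroot
    rw [← map_pow]
    have : (c : K) ^ (q - 1) = 1 := by
      have := pow_card_eq_one (x := c) (G := Kˣ)
      rw [Fintype.card_units, hK] at this
      calc (c : K) ^ (q-1) = ((c ^ (q-1) : Kˣ) : K) := by push_cast; ring
        _ = 1 := by rw [this]; rfl
    rw [this, map_one]
  have hcardT : T.card = q - 1 := by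
    rw [hT, Finset.card_image_of_injective _
      (fun a b hab => Units.ext ((algebraMap K L).injective hab)),
      Finset.card_univ, Fintype.card_units, hK]
  have hTeqR : T = R := Finset.eq_of_subset_of_card_le hTR (by omega)
  have : x ∈ T := by rw [hTeqR]; exact hroot x hx
  rw [hT, Finset.mem_image] at this
  obtain ⟨c, _, hc⟩ := this
  exact ⟨c, hc⟩

lemma fiberconst (M N Q : ℕ) (hM : 0 < M) (hNM : N ∣ M) (hN0 : 0 < N)
    (hQu : IsUnit (Q : ZMod N)) (P : ℕ → Prop) [DecidablePred P]
    (hstep : ∀ k, k < M → (P ((k + Q) % M) ↔ P k)) (r : ZMod N) :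
    ((Finset.range M).filter (fun k => P k ∧ (k : ZMod N) = r)).card
      = ((Finset.range M).filter (fun k => P k ∧ (k : ZMod N) = 0)).card := by
  haveI : NeZero N := ⟨hN0.ne'⟩
  obtain ⟨d, e, hde, heM⟩ : ∃ d e, M * d + e = Q ∧ e < M :=
    ⟨Q / M, Q % M, Nat.div_add_mod Q M, Nat.mod_lt _ hM⟩
  have castmod : ∀ a : ℕ, ((a % M : ℕ) : ZMod N) = (a : ZMod N) := by
    intro a
    rw [ZMod.natCast_eq_natCast_iff]
    exact Nat.mod_mod_of_dvd a hNM
  have hMz : ((M : ℕ) : ZMod N) = 0 := (ZMod.natCast_eq_zero_iff M N).mpr hNM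
  have heQ : ((e : ℕ) : ZMod N) = (Q : ZMod N) := by
    rw [← hde]; push_cast [hMz]; ring
  have arithA : ∀ k, ((k + (M - e)) % M + Q) % M = k % M := by
    intro k
    rw [Nat.mod_add_mod]
    have h1 : k + (M - e) + Q = k + (M * d + M) := by omega
    rw [h1, show M * d + M = (d + 1) * M by ring, Nat.add_mul_mod_self_right]
  have arithB : ∀ k, k < M → ((k + Q) % M + (M - e)) % M = k := by
    intro k hk
    rw [Nat.mod_add_mod]
    have h1 : k + Q + (M - e) = k + (M * d + M) := by omega
    rw [h1, show M * d + M = (d + 1) * M by ring, Nat.add_mul_mod_self_right,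
      Nat.mod_eq_of_lt hk]
  have step : ∀ r : ZMod N,
      ((Finset.range M).filter (fun k => P k ∧ (k : ZMod N) = r)).card
        = ((Finset.range M).filter (fun k => P k ∧ (k : ZMod N) = r + Q)).card := by
    intro r
    apply Finset.card_nbij' (fun k => (k + Q) % M) (fun k => (k + (M - e)) % M)
    · intro k hk
      simp only [Finset.mem_coe, Finset.mem_filter, Finset.mem_range] at hk ⊢
      refine ⟨Nat.mod_lt _ hM, (hstep k hk.1).mpr hk.2.1, ?_⟩
      rw [castmod]; push_cast [hk.2.2]; ring
    · intro k hk
      simp only [Finset.mem_coe, Finset.mem_filter, Finset.mem_range] at hk ⊢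
      have hkM : (k + (M - e)) % M < M := Nat.mod_lt _ hM
      refine ⟨hkM, ?_, ?_⟩
      · have := (hstep _ hkM)
        rw [arithA k, Nat.mod_eq_of_lt hk.1] at this
        exact this.mp hk.2.1
      · rw [castmod]
        push_cast [hk.2.2]
        have : ((M - e : ℕ) : ZMod N) = -(Q : ZMod N) := by
          rw [Nat.cast_sub heM.le, hMz, heQ]; ring
        rw [this]; ring
    · intro k hk
      simp only [Finset.mem_coe, Finset.mem_filter, Finset.mem_range] at hk
      exact arithB k hk.1
    · intro k hk
      simp only [Finset.mem_coe, Finset.mem_filter, Finset.mem_range] at hk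
      show ((k + (M - e)) % M + Q) % M = k
      rw [arithA k, Nat.mod_eq_of_lt hk.1]
  have key : ∀ (n : ℕ) (r : ZMod N),
      ((Finset.range M).filter (fun k => P k ∧ (k : ZMod N) = r)).card
        = ((Finset.range M).filter (fun k => P k ∧ (k : ZMod N) = r + n * Q)).card := by
    intro n
    induction n with
    | zero => intro r; simp
    | succ n ih =>
      intro r
      rw [step r, ih (r + Q)]
      congr 1
      push_cast
      ring_nf
  obtain ⟨u, hu⟩ := hQu
  set n := (r * ((u⁻¹ : (ZMod N)ˣ) : ZMod N)).val with hn
  have hnr : ((0 : ZMod N) + (n : ZMod N) * (Q : ZMod N)) = r := by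
    rw [hn, ZMod.natCast_val, ZMod.cast_id, ← hu, zero_add, mul_assoc]
    simp
  have := key n 0
  rw [hnr] at this
  exact this.symm

/-- `N ∣ q-1` coprime to `Q` gives `Z_{q,m,N}(0) = (φ(N)/N)(q^{m-1} - 1)`. -/
theorem stmt_1 (p s m q Q N : ℕ) [Fact p.Prime] (hs : 0 < s) (hm : 0 < m)
    (hq : q = p ^ s) (hQ : Q = (q ^ m - 1) / (q - 1))
    (K L : Type) [Field K] [Fintype K] [Field L] [Fintype L] [Algebra K L]
    (hK : Fintype.card K = q) (hL : Fintype.card L = q ^ m)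
    (α : Lˣ) (hα : ∀ x : Lˣ, x ∈ Subgroup.zpowers α)
    (hN : N ∣ q - 1) (hNQ : Nat.Coprime N Q) :
    (Zcount K L α N (0 : K) : ℚ) =
      ((Nat.totient N : ℚ) / (N : ℚ)) * ((q : ℚ) ^ (m - 1) - 1) := by
  classical
  have hp := (Fact.out : p.Prime)
  have hq2 : 2 ≤ q := by
    rw [hq]
    calc 2 ≤ p := hp.two_le
    _ ≤ p ^ s := Nat.le_self_pow hs.ne' p
  set M := q ^ m - 1 with hMdef
  have hqm1 : q ≤ q ^ m := Nat.le_self_pow hm.ne' q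
  have hM0 : 0 < M := by omega
  have hdvd : (q - 1) ∣ M := by simpa using Nat.sub_dvd_pow_sub_pow q 1 m
  have hQmul : (q - 1) * Q = M := by rw [hQ]; exact Nat.mul_div_cancel' hdvd
  have hNM : N ∣ M := hN.trans hdvd
  have hN0 : 0 < N := Nat.pos_of_dvd_of_pos hN (by omega)
  haveI : NeZero N := ⟨hN0.ne'⟩
  have hcardU : Fintype.card Lˣ = M := by rw [Fintype.card_units, hL]
  have hord : orderOf α = M := by rw [orderOf_eq_card_of_forall_mem_zpowers hα, Nat.card_eq_fintype_card, hcardU]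
  have hαM : α ^ M = 1 := by rw [← hord]; exact pow_orderOf_eq_one α
  -- cast of mod M into ZMod N
  have castmod : ∀ a : ℕ, ((a % M : ℕ) : ZMod N) = (a : ZMod N) := by
    intro a
    rw [ZMod.natCast_eq_natCast_iff]
    exact Nat.mod_mod_of_dvd a hNM
  -- α^Q comes from K
  obtain ⟨c, hc⟩ : ∃ c : Kˣ, algebraMap K L c = ((α : Lˣ) : L) ^ Q := by
    apply memAlgebraMap q hq2 K L hK
    have : (α ^ Q : Lˣ) ^ (q - 1) = 1 := by
      rw [← pow_mul, mul_comm Q (q-1), hQmul, hαM]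
    calc (((α : Lˣ) : L) ^ Q) ^ (q-1) = (((α ^ Q : Lˣ) ^ (q-1) : Lˣ) : L) := by push_cast; ring
    _ = 1 := by rw [this]; rfl
  set tr : L → K := fun x => Algebra.trace K L x with htr
  -- step property
  have hstep : ∀ k, k < M →
      (tr ((α ^ ((k + Q) % M) : Lˣ) : L) = 0 ↔ tr ((α ^ k : Lˣ) : L) = 0) := by
    intro k _
    have h1 : (α ^ ((k + Q) % M) : Lˣ) = α ^ (k + Q) := by rw [← hord]; exact pow_mod_orderOf α (k + Q)
    have h2 : ((α ^ (k + Q) : Lˣ) : L) = (c : K) • ((α ^ k : Lˣ) : L) := by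
      push_cast [pow_add]
      rw [Algebra.smul_def, hc]
      ring
    rw [h1, h2, htr]
    simp only [map_smul, smul_eq_mul]
    constructor
    · intro h
      rcases mul_eq_zero.mp h with h' | h'
      · exact absurd h' c.ne_zero
      · exact h'
    · intro h; rw [h, mul_zero]
  set F : ZMod N → ℕ := fun r =>
    ((Finset.range M).filter (fun k : ℕ => tr ((α ^ k : Lˣ) : L) = 0 ∧ (k : ZMod N) = r)).card
    with hF
  have hQunit : IsUnit ((Q : ℕ) : ZMod N) := by
    rw [ZMod.isUnit_iff_coprime]
    exact hNQ.symm
  have hconst : ∀ r, F r = F 0 := by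
    intro r
    rw [hF]
    exact fiberconst M N Q hM0 hNM hN0 hQunit (fun k => tr ((α ^ k : Lˣ) : L) = 0) hstep r
  -- total = N * F 0
  have htot : ((Finset.range M).filter (fun k => tr ((α ^ k : Lˣ) : L) = 0)).card = N * F 0 := by
    rw [Finset.card_eq_sum_card_fiberwise
      (f := fun k : ℕ => (k : ZMod N)) (t := Finset.univ) (fun x _ => Finset.mem_univ _)]
    calc ∑ r : ZMod N, (((Finset.range M).filter
          (fun k : ℕ => tr ((α ^ k : Lˣ) : L) = 0)).filter (fun k : ℕ => (k : ZMod N) = r)).card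
        = ∑ r : ZMod N, F r := by
          apply Finset.sum_congr rfl
          intro r _
          rw [Finset.filter_filter]
      _ = ∑ _r : ZMod N, F 0 := Finset.sum_congr rfl (fun r _ => hconst r)
      _ = N * F 0 := by rw [Finset.sum_const, Finset.card_univ, ZMod.card, smul_eq_mul]
  -- injectivity of k ↦ α^k on range M
  have hinj : ∀ k1 ∈ Finset.range M, ∀ k2 ∈ Finset.range M,
      (α ^ k1 : Lˣ) = α ^ k2 → k1 = k2 := by
    intro k1 h1 k2 h2 h
    rw [Finset.mem_range] at h1 h2
    exact pow_injOn_Iio_orderOf (by rwa [Set.mem_Iio, hord]) (by rwa [Set.mem_Iio, hord]) h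
  -- total = q^(m-1) - 1
  have hq1le : 1 ≤ q ^ (m - 1) := Nat.one_le_pow _ _ (by omega)
  have hcardA : (Finset.univ.filter (fun x : L => tr x = 0)).card = q ^ (m - 1) := by
    have h1 := traceZeroCount K L
    rw [hK, hL] at h1
    have h2 : q ^ m = q ^ (m - 1) * q := by
      rw [← pow_succ]
      congr 1
      omega
    exact Nat.eq_of_mul_eq_mul_right (by omega) (h1.trans h2)
  have htot2 : ((Finset.range M).filter (fun k => tr ((α ^ k : Lˣ) : L) = 0)).card
      = q ^ (m - 1) - 1 := by
    have hbij : ((Finset.range M).filter (fun k => tr ((α ^ k : Lˣ) : L) = 0)).card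
        = ((Finset.univ.filter (fun x : L => tr x = 0)).erase 0).card := by
      apply Finset.card_bij (fun k _ => ((α ^ k : Lˣ) : L))
      · intro k hk
        rw [Finset.mem_filter] at hk
        rw [Finset.mem_erase]
        exact ⟨Units.ne_zero _, Finset.mem_filter.mpr ⟨Finset.mem_univ _, hk.2⟩⟩
      · intro k1 h1 k2 h2 h
        exact hinj k1 (Finset.mem_filter.mp h1).1 k2 (Finset.mem_filter.mp h2).1
          (Units.ext h)
      · intro x hx
        rw [Finset.mem_erase, Finset.mem_filter] at hx
        obtain ⟨hx0, _, hxtr⟩ := hx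
        obtain ⟨z, hz⟩ := hα (Units.mk0 x hx0)
        have hzmod : α ^ ((z % (M : ℤ)).toNat) = Units.mk0 x hx0 := by
          rw [← hz, ← zpow_natCast,
            Int.toNat_of_nonneg (Int.emod_nonneg z (by exact_mod_cast hM0.ne')), ← hord,
            zpow_mod_orderOf]
        refine ⟨(z % (M : ℤ)).toNat, ?_, ?_⟩
        · rw [Finset.mem_filter, Finset.mem_range]
          constructor
          · have := Int.emod_lt_of_pos z (by exact_mod_cast hM0 : (0:ℤ) < (M:ℤ))
            omega
          · rw [hzmod]
            simpa using hxtr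
        · rw [hzmod]
          rfl
    rw [hbij, Finset.card_erase_of_mem, hcardA]
    simp [htr]
  -- Zcount = totient N * F 0
  have hZ : Zcount K L α N (0 : K) = N.totient * F 0 := by
    have eunits : (ZMod N)ˣ ≃ {r : ZMod N // IsUnit r} :=
      ⟨fun u => ⟨u, u.isUnit⟩, fun x => x.2.unit,
        fun u => Units.ext u.isUnit.unit_spec,
        fun x => Subtype.ext x.2.unit_spec⟩
    have hcardunits : (Finset.univ.filter (fun r : ZMod N => IsUnit r)).card = N.totient := by
      rw [← Fintype.card_subtype, ← Fintype.card_congr eunits, ZMod.card_units_eq_totient]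
    set Sfree := (Finset.range M).filter
      (fun k : ℕ => tr ((α ^ k : Lˣ) : L) = 0 ∧ IsUnit ((k : ℕ) : ZMod N)) with hSfree
    have hstep1 : Zcount K L α N (0 : K) = Sfree.card := by
      rw [Zcount, Set.ncard_eq_toFinset_card']
      refine (Finset.card_bij (fun (k : ℕ) (_ : k ∈ Sfree) => (α ^ k : Lˣ)) ?_ ?_ ?_).symm
      · intro k hk
        rw [hSfree, Finset.mem_filter] at hk
        rw [Set.mem_toFinset]
        exact ⟨⟨k, (ZMod.isUnit_iff_coprime k N).mp hk.2.2, rfl⟩, hk.2.1⟩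
      · intro k1 h1 k2 h2 h
        exact hinj k1 (Finset.mem_filter.mp h1).1 k2 (Finset.mem_filter.mp h2).1 h
      · intro ξ hξ
        rw [Set.mem_toFinset] at hξ
        obtain ⟨⟨k', hcop, rfl⟩, htr0⟩ := hξ
        have hkk : (α ^ (k' % M) : Lˣ) = α ^ k' := by
          rw [← hord]
          exact pow_mod_orderOf α k'
        refine ⟨k' % M, ?_, hkk⟩
        rw [hSfree, Finset.mem_filter, Finset.mem_range]
        refine ⟨Nat.mod_lt _ hM0, ?_, ?_⟩
        · rw [hkk]; exact htr0
        · rw [castmod k']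
          exact (ZMod.isUnit_iff_coprime k' N).mpr hcop
    have hstep2 : Sfree.card = ∑ r ∈ Finset.univ.filter (fun r : ZMod N => IsUnit r), F r := by
      rw [Finset.card_eq_sum_card_fiberwise (f := fun k : ℕ => (k : ZMod N))
        (t := Finset.univ.filter (fun r : ZMod N => IsUnit r))
        (fun k hk => Finset.mem_filter.mpr
          ⟨Finset.mem_univ _, (Finset.mem_filter.mp hk).2.2⟩)]
      apply Finset.sum_congr rfl
      intro r hr
      rw [hSfree, Finset.filter_filter, hF]
      congr 1
      apply Finset.filter_congr
      intro k _
      constructor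
      · rintro ⟨⟨h1, _⟩, h3⟩
        exact ⟨h1, h3⟩
      · rintro ⟨h1, h3⟩
        exact ⟨⟨h1, h3 ▸ (Finset.mem_filter.mp hr).2⟩, h3⟩
    rw [hstep1, hstep2, Finset.sum_congr rfl (fun r _ => hconst r), Finset.sum_const,
      smul_eq_mul, hcardunits]
  have hNF : N * F 0 = q ^ (m - 1) - 1 := htot.symm.trans htot2
  rw [hZ]
  have hcast : ((q : ℚ) ^ (m - 1) - 1) = ((q ^ (m - 1) - 1 : ℕ) : ℚ) := by
    push_cast [Nat.cast_sub hq1le]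
    ring
  rw [hcast, ← hNF]
  push_cast
  have hNne : (N : ℚ) ≠ 0 := by exact_mod_cast hN0.ne'
  field_simp
end

section
/- Let q be a power of a prime p and let ℓ be a prime such that Q = (q^ℓ - 1)/(q - 1) is prime. Then the number of primitive elements ξ ∈ F_{q^ℓ} satisfying Tr_{F_{q^ℓ}/F_q}(ξ) = 0 is Z_{q,ℓ,q^ℓ-1}(0) = φ(q^ℓ - 1)/q if ℓ ≠ p, and Z_{q,ℓ,q^ℓ-1}(0) = φ(q^ℓ - 1)/q - φ(q - 1) if ℓ = p. -/
open scoped BigOperators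
open scoped Classical

theorem crt_count (n₁ n₂ : ℕ) (h₁ : 0 < n₁) (h₂ : 0 < n₂) (h : Nat.Coprime n₁ n₂)
    (P₁ P₂ : ℕ → Prop) :
    ((Finset.range (n₁ * n₂)).filter (fun k => P₁ (k % n₁) ∧ P₂ (k % n₂))).card
      = ((Finset.range n₁).filter P₁).card * ((Finset.range n₂).filter P₂).card := by
  rw [← Finset.card_product]
  apply Finset.card_bij (fun k _ => (k % n₁, k % n₂))
  · intro k hk
    simp only [Finset.mem_filter, Finset.mem_range] at hk
    simp only [Finset.mem_product, Finset.mem_filter, Finset.mem_range]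
    exact ⟨⟨Nat.mod_lt _ h₁, hk.2.1⟩, ⟨Nat.mod_lt _ h₂, hk.2.2⟩⟩
  · intro k₁ hk₁ k₂ hk₂ hEq
    simp only [Finset.mem_filter, Finset.mem_range] at hk₁ hk₂
    have e1 : k₁ ≡ k₂ [MOD n₁] := by
      unfold Nat.ModEq; exact congrArg Prod.fst hEq
    have e2 : k₁ ≡ k₂ [MOD n₂] := by
      unfold Nat.ModEq; exact congrArg Prod.snd hEq
    have := (Nat.modEq_and_modEq_iff_modEq_mul h).mp ⟨e1, e2⟩
    unfold Nat.ModEq at this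
    rwa [Nat.mod_eq_of_lt hk₁.1, Nat.mod_eq_of_lt hk₂.1] at this
  · rintro ⟨a, b⟩ hab
    simp only [Finset.mem_product, Finset.mem_filter, Finset.mem_range] at hab
    obtain ⟨⟨ha, hPa⟩, ⟨hb, hPb⟩⟩ := hab
    set c := Nat.chineseRemainder h a b with hc
    refine ⟨(c : ℕ) % (n₁ * n₂), ?_, ?_⟩
    · have hca : (c : ℕ) % (n₁*n₂) % n₁ = a := by
        rw [Nat.mod_mod_of_dvd _ ⟨n₂, rfl⟩]
        have := c.prop.1
        unfold Nat.ModEq at this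
        rw [this, Nat.mod_eq_of_lt ha]
      have hcb : (c : ℕ) % (n₁*n₂) % n₂ = b := by
        rw [Nat.mod_mod_of_dvd _ ⟨n₁, Nat.mul_comm _ _⟩]
        have := c.prop.2
        unfold Nat.ModEq at this
        rw [this, Nat.mod_eq_of_lt hb]
      simp only [Finset.mem_filter, Finset.mem_range]
      exact ⟨Nat.mod_lt _ (Nat.mul_pos h₁ h₂), by rw [hca]; exact hPa, by rw [hcb]; exact hPb⟩
    · have hca : (c : ℕ) % (n₁*n₂) % n₁ = a := by
        rw [Nat.mod_mod_of_dvd _ ⟨n₂, rfl⟩]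
        have := c.prop.1
        unfold Nat.ModEq at this
        rw [this, Nat.mod_eq_of_lt ha]
      have hcb : (c : ℕ) % (n₁*n₂) % n₂ = b := by
        rw [Nat.mod_mod_of_dvd _ ⟨n₁, Nat.mul_comm _ _⟩]
        have := c.prop.2
        unfold Nat.ModEq at this
        rw [this, Nat.mod_eq_of_lt hb]
      rw [hca, hcb]


theorem pow_count {G : Type} [Group G] [Fintype G] (α : G)
    (h : orderOf α = Fintype.card G) (hα : ∀ x : G, x ∈ Subgroup.zpowers α)
    (P : G → Prop) :
    ((Finset.range (Fintype.card G)).filter (fun k => P (α ^ k))).card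
      = (Finset.univ.filter P).card := by
  apply Finset.card_bij (fun k _ => α ^ k)
  · intro k hk
    simp only [Finset.mem_filter, Finset.mem_range] at hk
    simp only [Finset.mem_filter, Finset.mem_univ, true_and]
    exact hk.2
  · intro k₁ hk₁ k₂ hk₂ hEq
    simp only [Finset.mem_filter, Finset.mem_range] at hk₁ hk₂
    exact pow_injOn_Iio_orderOf (by rw [h]; exact hk₁.1) (by rw [h]; exact hk₂.1) hEq
  · intro x hx
    simp only [Finset.mem_filter, Finset.mem_univ, true_and] at hx
    obtain ⟨n, hn⟩ := (isOfFinOrder_of_finite α).mem_powers_iff_mem_zpowers.mpr (hα x)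
    simp only [] at hn
    have hn' : α ^ n = x := hn
    refine ⟨n % Fintype.card G, ?_, ?_⟩
    · simp only [Finset.mem_filter, Finset.mem_range]
      constructor
      · exact Nat.mod_lt _ Fintype.card_pos
      · rw [← h, pow_mod_orderOf, hn']; exact hx
    · rw [← h, pow_mod_orderOf, hn']


theorem exists_algebraMap_eq (K L : Type) [Field K] [Fintype K] [Field L] [Fintype L]
    [Algebra K L] (q : ℕ) (hq : 2 ≤ q) (hK : Fintype.card K = q)
    (x : L) (hx : x ^ q = x) : ∃ b : K, algebraMap K L b = x := by
  classical
  set P : Polynomial L := Polynomial.X ^ q - Polynomial.X with hP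
  have hPne : P ≠ 0 := by
    intro h0
    have : P.coeff q = 1 := by
      simp only [hP, Polynomial.coeff_sub, Polynomial.coeff_X_pow, Polynomial.coeff_X]
      rw [if_pos trivial, if_neg (by omega : ¬ 1 = q)]
      norm_num
    rw [h0] at this
    simp at this
  have hdeg : P.natDegree ≤ q := by
    refine le_trans (Polynomial.natDegree_sub_le _ _) ?_
    simp [Polynomial.natDegree_X_pow]
    omega
  set T : Finset L := P.roots.toFinset with hT
  have hTcard : T.card ≤ q := by
    refine le_trans (Multiset.toFinset_card_le _) (le_trans (Polynomial.card_roots' P) hdeg)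
  set S : Finset L := Finset.univ.image (algebraMap K L) with hS
  have hScard : S.card = q := by
    rw [hS, Finset.card_image_of_injective _ (algebraMap K L).injective, Finset.card_univ, hK]
  have hsub : S ⊆ T := by
    intro y hy
    simp only [hS, Finset.mem_image, Finset.mem_univ, true_and] at hy
    obtain ⟨b, rfl⟩ := hy
    have hyq : (algebraMap K L b) ^ q = algebraMap K L b := by
      rw [← map_pow, ← hK, FiniteField.pow_card]
    rw [hT, Multiset.mem_toFinset, Polynomial.mem_roots hPne]
    simp [hP, Polynomial.IsRoot, hyq, sub_eq_zero]
  have hST : S = T := Finset.eq_of_subset_of_card_le hsub (by omega)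
  have hxT : x ∈ T := by
    rw [hT, Multiset.mem_toFinset, Polynomial.mem_roots hPne]
    simp [hP, Polynomial.IsRoot, hx, sub_eq_zero]
  rw [← hST] at hxT
  simp only [hS, Finset.mem_image, Finset.mem_univ, true_and] at hxT
  exact hxT


theorem tracezero_count (K L : Type) [Field K] [Fintype K] [Field L] [Fintype L]
    [Algebra K L] (q m : ℕ) (hq : 2 ≤ q) (hm : 1 ≤ m)
    (hK : Fintype.card K = q) (hL : Fintype.card L = q ^ m) :
    (Finset.univ.filter (fun ξ : Lˣ => Algebra.trace K L (ξ : L) = 0)).card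
      = q ^ (m - 1) - 1 := by
  classical
  have hFD : FiniteDimensional K L := Module.Finite.of_finite
  have hcardL : Fintype.card L = Fintype.card K ^ Module.finrank K L := Module.card_eq_pow_finrank
  have hfr : Module.finrank K L = m := by
    have : q ^ m = q ^ Module.finrank K L := by rw [← hL, hcardL, hK]
    exact (Nat.pow_right_injective hq this).symm
  have hsurj : Function.Surjective (Algebra.trace K L) := Algebra.trace_surjective K L
  set f : L →ₗ[K] K := Algebra.trace K L with hf
  have hrange : LinearMap.range f = ⊤ := LinearMap.range_eq_top.mpr hsurj
  have hker : Module.finrank K (LinearMap.ker f) = m - 1 := by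
    have h1 := LinearMap.finrank_range_add_finrank_ker f
    rw [hrange, finrank_top, hfr, Module.finrank_self] at h1
    omega
  have hkercard : Fintype.card (LinearMap.ker f) = q ^ (m - 1) := by
    rw [(Module.card_eq_pow_finrank : Fintype.card (LinearMap.ker f)
      = Fintype.card K ^ Module.finrank K (LinearMap.ker f)), hK, hker]
  -- now count
  have h2 : (Finset.univ.filter (fun x : L => f x = 0)).card = q ^ (m - 1) := by
    rw [← hkercard, ← Fintype.card_subtype]
    exact (Fintype.card_congr (Equiv.subtypeEquivRight
      (fun x => (LinearMap.mem_ker (f := f))))).symm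
  have h3 : (Finset.univ.filter (fun ξ : Lˣ => f (ξ : L) = 0)).card
      = (Finset.univ.filter (fun x : L => f x = 0 ∧ x ≠ 0)).card := by
    refine Finset.card_bij (fun (ξ : Lˣ) _ => (ξ : L)) ?_ ?_ ?_
    · intro ξ hξ
      simp only [Finset.mem_filter, Finset.mem_univ, true_and] at hξ ⊢
      exact ⟨hξ, Units.ne_zero ξ⟩
    · intro ξ₁ _ ξ₂ _ hEq
      exact Units.ext hEq
    · intro x hx
      simp only [Finset.mem_filter, Finset.mem_univ, true_and] at hx
      exact ⟨Units.mk0 x hx.2, by simp [Finset.mem_filter, hx.1], rfl⟩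
  have h4 : (Finset.univ.filter (fun x : L => f x = 0 ∧ x ≠ 0))
      = (Finset.univ.filter (fun x : L => f x = 0)).erase 0 := by
    ext x
    simp only [Finset.mem_filter, Finset.mem_univ, true_and, Finset.mem_erase]
    tauto
  have h0mem : (0 : L) ∈ Finset.univ.filter (fun x : L => f x = 0) := by
    simp [Finset.mem_filter]
  rw [h3, h4, Finset.card_erase_of_mem h0mem, h2]


/-- number of primitive elements of trace zero when `Q = (q^ℓ-1)/(q-1)` is prime. -/
theorem stmt_2 (p s ℓ q : ℕ) [Fact p.Prime] (hs : 0 < s) (hq : q = p ^ s)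
    (hl : ℓ.Prime) (hQprime : Nat.Prime ((q ^ ℓ - 1) / (q - 1)))
    (K L : Type) [Field K] [Fintype K] [Field L] [Fintype L] [Algebra K L]
    (hK : Fintype.card K = q) (hL : Fintype.card L = q ^ ℓ)
    (α : Lˣ) (hα : ∀ x : Lˣ, x ∈ Subgroup.zpowers α) :
    (ℓ ≠ p → (Zcount K L α (q ^ ℓ - 1) (0 : K) : ℚ) =
        (Nat.totient (q ^ ℓ - 1) : ℚ) / (q : ℚ)) ∧
    (ℓ = p → (Zcount K L α (q ^ ℓ - 1) (0 : K) : ℚ) =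
        (Nat.totient (q ^ ℓ - 1) : ℚ) / (q : ℚ) - (Nat.totient (q - 1) : ℚ)) := by
  classical
  have pp : p.Prime := Fact.out
  have hq2 : 2 ≤ q := by
    rw [hq]
    calc 2 ≤ p := pp.two_le
    _ ≤ p ^ s := Nat.le_self_pow (by omega) p
  have hl2 : 2 ≤ ℓ := hl.two_le
  set N : ℕ := q ^ ℓ - 1 with hN
  set Q : ℕ := (q ^ ℓ - 1) / (q - 1) with hQ
  have hq1 : 0 < q - 1 := by omega
  have hq2l : q ^ 2 ≤ q ^ ℓ := Nat.pow_le_pow_right (by omega) hl2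
  have hq4 : 4 ≤ q ^ ℓ := by
    have : 2 * 2 ≤ q * q := Nat.mul_le_mul hq2 hq2
    have h22 : q ^ 2 = q * q := sq q
    omega
  have hNpos : 0 < N := by omega
  have hdvd : (q - 1) ∣ N := by
    have := Nat.sub_dvd_pow_sub_pow q 1 ℓ
    simpa using this
  have hQN : (q - 1) * Q = N := Nat.mul_div_cancel' hdvd
  have hQpos : 0 < Q := by
    rcases Nat.eq_zero_or_pos Q with h | h
    · rw [h, Nat.mul_zero] at hQN; omega
    · exact h
  have hQgt : q - 1 < Q := by
    by_contra hcon
    push_neg at hcon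
    have h1 : N ≤ (q - 1) * (q - 1) := by
      calc N = (q - 1) * Q := hQN.symm
      _ ≤ (q - 1) * (q - 1) := Nat.mul_le_mul_left _ hcon
    have h2 : (q - 1) * (q - 1) < (q + 1) * (q - 1) := by
      exact (Nat.mul_lt_mul_right hq1).mpr (by omega)
    have h3 : (q + 1) * (q - 1) = q ^ 2 - 1 := (Nat.sq_sub_sq q 1).symm.trans (by norm_num)
    omega
  have hQcop : Nat.Coprime Q (q - 1) := by
    rw [Nat.Prime.coprime_iff_not_dvd hQprime]
    intro hdv
    have := Nat.le_of_dvd hq1 hdv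
    omega
  have hcardU : Fintype.card Lˣ = N := by
    rw [Fintype.card_units, hL]
  have hord : orderOf α = N := by
    rw [orderOf_eq_card_of_forall_mem_zpowers hα, Nat.card_eq_fintype_card, hcardU]
  -- characteristic of K
  have hcharK : CharP K p := by
    have h1 : CharP K (ringChar K) := ringChar.charP K
    obtain ⟨n, hnp, hcard⟩ := FiniteField.card K (ringChar K)
    have hrp : ringChar K = p := by
      have hd : ringChar K ∣ p ^ s := by
        rw [← hq, ← hK, hcard]
        exact dvd_pow_self _ (by positivity)
      have := hnp.dvd_of_dvd_pow hd
      exact (Nat.prime_dvd_prime_iff_eq hnp pp).mp this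
    rw [← hrp]
    exact h1
  -- finrank
  have hFD : FiniteDimensional K L := Module.Finite.of_finite
  have hfr : Module.finrank K L = ℓ := by
    have hcardL : Fintype.card L = Fintype.card K ^ Module.finrank K L := Module.card_eq_pow_finrank
    have : q ^ ℓ = q ^ Module.finrank K L := by rw [← hL, hcardL, hK]
    exact (Nat.pow_right_injective hq2 this).symm
  have hTr1 : Algebra.trace K L 1 = (ℓ : K) := by
    have h1 : Algebra.trace K L (algebraMap K L 1) = Module.finrank K L • (1 : K) :=
      Algebra.trace_algebraMap 1
    rw [map_one] at h1
    rw [h1, hfr, nsmul_eq_mul, mul_one]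
  have hTr1_iff : Algebra.trace K L 1 = 0 ↔ ℓ = p := by
    rw [hTr1, CharP.cast_eq_zero_iff K p ℓ]
    constructor
    · intro h; exact ((Nat.prime_dvd_prime_iff_eq pp hl).mp h).symm
    · intro h; rw [h]
  -- b : K with algebraMap b = α^Q
  obtain ⟨b, hb⟩ : ∃ b : K, algebraMap K L b = (α : L) ^ Q := by
    apply exists_algebraMap_eq K L q hq2 hK
    have hQq : Q * q = Q * (q - 1) + Q := by
      have : Q * ((q - 1) + 1) = Q * (q - 1) + Q := by ring
      rw [← this]
      congr 1
      omega
    have hu : (α ^ Q) ^ q = α ^ Q := by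
      have h1 : (α ^ Q) ^ q = (α ^ Q) ^ (q - 1) * α ^ Q := by
        rw [← pow_succ]
        congr 1
        omega
      rw [h1, ← pow_mul, mul_comm Q (q - 1), hQN, ← hord, pow_orderOf_eq_one, one_mul]
    calc ((α : L) ^ Q) ^ q = (((α ^ Q) ^ q : Lˣ) : L) := by push_cast; ring
    _ = (((α ^ Q : Lˣ)) : L) := by rw [hu]
    _ = (α : L) ^ Q := by push_cast; ring
  have hbne : b ≠ 0 := by
    intro h0
    rw [h0, map_zero] at hb
    exact (α ^ Q).ne_zero (by push_cast at hb ⊢; exact hb.symm)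
  -- periodicity of trace in exponent mod Q
  have hper : ∀ k : ℕ, (Algebra.trace K L ((α : L) ^ k) = 0
      ↔ Algebra.trace K L ((α : L) ^ (k % Q)) = 0) := by
    intro k
    have hdecomp : (α : L) ^ k = algebraMap K L (b ^ (k / Q)) * (α : L) ^ (k % Q) := by
      rw [map_pow, hb, ← pow_mul, ← pow_add, Nat.div_add_mod]
    rw [hdecomp, ← Algebra.smul_def, map_smul, smul_eq_mul]
    constructor
    · intro h
      rcases mul_eq_zero.mp h with h | h
      · exact absurd h (pow_ne_zero _ hbne)
      · exact h
    · intro h; rw [h, mul_zero]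
  -- Zcount as a Finset card
  set F : Finset ℕ := (Finset.range N).filter
    (fun k => Nat.Coprime k N ∧ Algebra.trace K L ((α : L) ^ k) = 0) with hF
  have hZ : Zcount K L α N 0 = F.card := by
    have hSet : {ξ : Lˣ | IsNFree α ξ N ∧ Algebra.trace K L (ξ : L) = 0}
        = ↑(F.image (fun k => α ^ k)) := by
      ext ξ
      simp only [Set.mem_setOf_eq, Finset.coe_image, Set.mem_image, Finset.mem_coe, hF,
        Finset.mem_filter, Finset.mem_range]
      constructor
      · rintro ⟨⟨k0, hcop, rfl⟩, htr⟩
        refine ⟨k0 % N, ⟨Nat.mod_lt _ hNpos, ?_, ?_⟩, ?_⟩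
        · unfold Nat.Coprime
          rw [← Nat.gcd_rec N k0, Nat.gcd_comm]
          exact hcop
        · have hco : (α : L) ^ (k0 % N) = ((α ^ k0 : Lˣ) : L) := by
            rw [← Units.val_pow_eq_pow_val]
            congr 1
            rw [← hord]
            exact pow_mod_orderOf α k0
          rw [hco]
          exact htr
        · rw [← hord]
          exact pow_mod_orderOf α k0
      · rintro ⟨k, ⟨hk, hcop, htr⟩, rfl⟩
        exact ⟨⟨k, hcop, rfl⟩, by rwa [Units.val_pow_eq_pow_val]⟩
    rw [Zcount, hSet, Set.ncard_coe_finset]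
    apply Finset.card_image_of_injOn
    intro k₁ hk₁ k₂ hk₂ hEq
    simp only [hF, Finset.coe_filter, Set.mem_setOf_eq, Finset.mem_range] at hk₁ hk₂
    exact pow_injOn_Iio_orderOf (by rw [hord]; exact hk₁.1) (by rw [hord]; exact hk₂.1) hEq
  -- CRT decomposition of F.card
  have hNQ : N = Q * (q - 1) := by rw [← hQN, mul_comm]
  set A2 : ℕ := ((Finset.range Q).filter
    (fun r => Algebra.trace K L ((α : L) ^ r) = 0)).card with hA2
  set A1 : ℕ := ((Finset.range Q).filter
    (fun r => r ≠ 0 ∧ Algebra.trace K L ((α : L) ^ r) = 0)).card with hA1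
  have hF2 : F.card = A1 * (q - 1).totient := by
    have hcrt := crt_count Q (q - 1) hQpos hq1 hQcop
      (fun r => r ≠ 0 ∧ Algebra.trace K L ((α : L) ^ r) = 0)
      (fun j => Nat.Coprime j (q - 1))
    have heqF : F = (Finset.range (Q * (q - 1))).filter
        (fun k => ((k % Q ≠ 0 ∧ Algebra.trace K L ((α : L) ^ (k % Q)) = 0))
          ∧ Nat.Coprime (k % (q - 1)) (q - 1)) := by
      rw [hF, show Finset.range N = Finset.range (Q * (q - 1)) by rw [hNQ]]
      apply Finset.filter_congr
      intro k _
      constructor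
      · rintro ⟨hcop, htr⟩
        rw [hNQ] at hcop
        obtain ⟨h1, h2⟩ := Nat.coprime_mul_iff_right.mp hcop
        refine ⟨⟨?_, (hper k).mp htr⟩, ?_⟩
        · intro h0
          have hQk : Q ∣ k := Nat.dvd_of_mod_eq_zero h0
          have hd1 : Q ∣ Nat.gcd k Q := Nat.dvd_gcd hQk dvd_rfl
          rw [h1] at hd1
          have := Nat.le_of_dvd one_pos hd1
          have := hQprime.two_le
          omega
        · unfold Nat.Coprime at h2 ⊢
          rw [← Nat.gcd_rec, Nat.gcd_comm]
          exact h2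
      · rintro ⟨⟨h0, htr⟩, hcop2⟩
        refine ⟨?_, (hper k).mpr htr⟩
        rw [hNQ]
        apply Nat.coprime_mul_iff_right.mpr
        constructor
        · rw [Nat.coprime_comm]
          refine (Nat.Prime.coprime_iff_not_dvd hQprime).mpr ?_
          intro hdv
          obtain ⟨t, rfl⟩ := hdv
          exact h0 (Nat.mul_mod_right Q t)
        · unfold Nat.Coprime at hcop2 ⊢
          rw [Nat.gcd_comm, Nat.gcd_rec]
          exact hcop2
    have htotB : ((Finset.range (q - 1)).filter
        (fun j => Nat.Coprime j (q - 1))).card = (q - 1).totient := by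
      rw [Nat.totient]
      congr 1
      apply Finset.filter_congr
      intro j _
      exact ⟨fun h => Nat.coprime_comm.mp h, fun h => Nat.coprime_comm.mp h⟩
    have hcrt' : ((Finset.range (Q * (q - 1))).filter
        (fun k => ((k % Q ≠ 0 ∧ Algebra.trace K L ((α : L) ^ (k % Q)) = 0))
          ∧ Nat.Coprime (k % (q - 1)) (q - 1))).card
        = ((Finset.range Q).filter
            (fun r => r ≠ 0 ∧ Algebra.trace K L ((α : L) ^ r) = 0)).card
          * ((Finset.range (q - 1)).filter (fun j => Nat.Coprime j (q - 1))).card := by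
      convert hcrt using 2 <;> congr!
    rw [heqF, hcrt', htotB, hA1]
  -- A2 * (q-1) = q^(ℓ-1) - 1
  have hA2mul : A2 * (q - 1) = q ^ (ℓ - 1) - 1 := by
    have hcrt := crt_count Q (q - 1) hQpos hq1 hQcop
      (fun r => Algebra.trace K L ((α : L) ^ r) = 0) (fun _ => True)
    have h2 : (Finset.range (Q * (q - 1))).filter
        (fun k => (Algebra.trace K L ((α : L) ^ (k % Q)) = 0) ∧ True)
        = (Finset.range N).filter (fun k => Algebra.trace K L ((α : L) ^ k) = 0) := by
      rw [show Finset.range (Q * (q - 1)) = Finset.range N by rw [hNQ]]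
      apply Finset.filter_congr
      intro k _
      simp only [and_true]
      exact ((hper k).symm : _)
    have h3 : ((Finset.range (q - 1)).filter (fun _ => True)).card = q - 1 := by
      simp
    have h5 := pow_count α (by rw [hord, hcardU]) hα
      (fun ξ : Lˣ => Algebra.trace K L (ξ : L) = 0)
    simp only [Units.val_pow_eq_pow_val] at h5
    rw [hcardU] at h5
    have h6 := tracezero_count K L q ℓ hq2 (by omega) hK hL
    have hcrt' : ((Finset.range (Q * (q - 1))).filter
        (fun k => (Algebra.trace K L ((α : L) ^ (k % Q)) = 0) ∧ True)).card
        = ((Finset.range Q).filter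
            (fun r => Algebra.trace K L ((α : L) ^ r) = 0)).card
          * ((Finset.range (q - 1)).filter (fun _ => True)).card := by
      convert hcrt using 2 <;> congr!
    rw [h2, h5, h6, h3] at hcrt'
    exact hcrt'.symm
  -- relation between A1 and A2
  have herase : (Finset.range Q).filter
      (fun r => r ≠ 0 ∧ Algebra.trace K L ((α : L) ^ r) = 0)
      = ((Finset.range Q).filter
        (fun r => Algebra.trace K L ((α : L) ^ r) = 0)).erase 0 := by
    ext r
    simp only [Finset.mem_filter, Finset.mem_range, Finset.mem_erase]
    tauto
  have h0mem_iff : ((0 : ℕ) ∈ (Finset.range Q).filter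
      (fun r => Algebra.trace K L ((α : L) ^ r) = 0)) ↔ ℓ = p := by
    simp only [Finset.mem_filter, Finset.mem_range, pow_zero]
    constructor
    · intro h
      exact hTr1_iff.mp h.2
    · intro h
      exact ⟨hQpos, hTr1_iff.mpr h⟩
  -- key arithmetic: q * A2 = Q - 1
  have hkey : q * A2 = Q - 1 := by
    have hpow : q * q ^ (ℓ - 1) = q ^ ℓ := by
      rw [← pow_succ']
      congr 1
      omega
    have hqlq : q ≤ q ^ ℓ := by
      calc q = q ^ 1 := (pow_one q).symm
      _ ≤ q ^ ℓ := Nat.pow_le_pow_right (by omega) (by omega)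
    have r1 : q * (q ^ (ℓ - 1) - 1) = q ^ ℓ - q := by
      rw [Nat.mul_sub, mul_one, hpow]
    have r2 : (Q - 1) * (q - 1) = q ^ ℓ - q := by
      have : (Q - 1) * (q - 1) = Q * (q - 1) - (q - 1) := by
        rw [Nat.sub_mul, one_mul]
      rw [this, mul_comm, hQN]
      omega
    have e1 : (q * A2) * (q - 1) = (Q - 1) * (q - 1) := by
      calc (q * A2) * (q - 1) = q * (A2 * (q - 1)) := by ring
      _ = q * (q ^ (ℓ - 1) - 1) := by rw [hA2mul]
      _ = q ^ ℓ - q := r1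
      _ = (Q - 1) * (q - 1) := r2.symm
    exact Nat.eq_of_mul_eq_mul_right hq1 e1
  have htotN : N.totient = (q - 1).totient * (Q - 1) := by
    rw [← hQN, Nat.totient_mul (Nat.Coprime.symm hQcop), Nat.totient_prime hQprime]
  have htotQ : (N.totient : ℚ) = (q : ℚ) * ((A2 : ℚ) * ((q - 1).totient : ℚ)) := by
    rw [htotN, ← hkey]
    push_cast
    ring
  have hq0 : (q : ℚ) ≠ 0 := by positivity
  constructor
  · intro hne
    have h0nmem : (0 : ℕ) ∉ (Finset.range Q).filter
        (fun r => Algebra.trace K L ((α : L) ^ r) = 0) := by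
      intro h
      exact hne (h0mem_iff.mp h)
    have hA12 : A1 = A2 := by
      rw [hA1, herase, Finset.erase_eq_of_notMem h0nmem, hA2]
    rw [hZ, hF2, hA12, eq_div_iff hq0]
    push_cast
    rw [htotQ]
    ring
  · intro heq
    have h0mem : (0 : ℕ) ∈ (Finset.range Q).filter
        (fun r => Algebra.trace K L ((α : L) ^ r) = 0) := h0mem_iff.mpr heq
    have hA12 : A1 = A2 - 1 := by
      rw [hA1, herase, Finset.card_erase_of_mem h0mem, hA2]
    have hA2pos : 1 ≤ A2 := by
      rw [hA2]
      exact Finset.card_pos.mpr ⟨0, h0mem⟩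
    rw [hZ, hF2, hA12]
    have hcast : (((A2 - 1) * (q - 1).totient : ℕ) : ℚ)
        = ((A2 : ℚ) - 1) * ((q - 1).totient : ℚ) := by
      push_cast [Nat.cast_sub hA2pos]
      ring
    rw [hcast, htotQ]
    field_simp
end

section
/- Let q = p^s be a power of a prime p and let m > 1 be an integer. Then there exists a positive integer j with p^j ≡ -1 (mod Rad((q^m - 1)/(q - 1))) if and only if m = 2, or q = p is a Mersenne prime and m = 4. In the latter case (q = p Mersenne, m = 4), the congruence p^j ≡ -1 (mod Rad((p^4 - 1)/(p - 1))) holds precisely for the integers j = 2k with k ≥ 1 odd. -/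
open scoped BigOperators
open scoped Classical

namespace Stmt6Aux

/-- geometric sum -/
def S (x n : ℕ) : ℕ := ∑ i ∈ Finset.range n, x ^ i

lemma S_succ (x n : ℕ) : S x (n+1) = S x n + x ^ n := Finset.sum_range_succ _ _

lemma S_one (x : ℕ) : S x 1 = 1 := by simp [S]

lemma Sadd (x a b : ℕ) : S x (a + b) = S x a + x ^ a * S x b := by
  induction b with
  | zero => simp [S]
  | succ b ih =>
    rw [show a + (b+1) = (a+b)+1 from rfl, S_succ, ih, S_succ, pow_add]
    ring

lemma Spos' (x n : ℕ) (hx : 1 ≤ x) (hn : 0 < n) : 0 < S x n := by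
  obtain ⟨k, rfl⟩ := Nat.exists_eq_add_of_lt hn
  rw [Nat.zero_add, S_succ]
  have := Nat.one_le_pow k x hx
  omega

lemma Smul (x n : ℕ) : x * S x n + 1 = S x n + x ^ n := by
  have h1 : S x (n + 1) = S x 1 + x ^ 1 * S x n := by rw [Nat.add_comm]; exact Sadd x 1 n
  rw [S_succ, S_one, pow_one] at h1
  omega

lemma gmul (x n : ℕ) (hx : 1 ≤ x) : (x - 1) * S x n = x ^ n - 1 := by
  have h1 := Smul x n
  have h2 : (x - 1) * S x n = x * S x n - 1 * S x n := Nat.sub_mul x 1 (S x n)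
  have h3 : 0 < S x n ∨ n = 0 := by
    rcases Nat.eq_zero_or_pos n with h | h
    · exact Or.inr h
    · exact Or.inl (Spos' x n hx h)
  rcases h3 with h | rfl
  · omega
  · simp [S]

lemma Nval (x n : ℕ) (hx : 2 ≤ x) : (x ^ n - 1) / (x - 1) = S x n := by
  have h := gmul x n (by omega)
  exact Nat.div_eq_of_eq_mul_left (by omega) (by rw [← h]; ring)

lemma Spos (x n : ℕ) (hx : 1 ≤ x) (hn : 0 < n) : 0 < S x n := Spos' x n hx hn

lemma Sgt1 (x n : ℕ) (hx : 2 ≤ x) (hn : 2 ≤ n) : 1 + x ≤ S x n := by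
  have h : S x (1 + (n-1)) = S x 1 + x ^ 1 * S x (n-1) := Sadd x 1 (n-1)
  rw [show 1 + (n-1) = n by omega] at h
  have := Spos x (n-1) (by omega) (by omega)
  rw [S_one] at h
  nlinarith

lemma Sdvd (x : ℕ) {d n : ℕ} (h : d ∣ n) : S x d ∣ S x n := by
  obtain ⟨k, rfl⟩ := h
  induction k with
  | zero => simp [S]
  | succ k ih =>
    rw [Nat.mul_succ, Sadd]
    exact Nat.dvd_add ih (dvd_mul_left _ _)

lemma Sdouble (x n : ℕ) : (x + 1) * S (x^2) n = S x (2 * n) := by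
  induction n with
  | zero => simp [S]
  | succ n ih =>
    rw [S_succ, Nat.mul_add, ih, show 2*(n+1) = (2*n)+1+1 from rfl, S_succ, S_succ,
      ← pow_mul]
    ring

lemma Sodd (x : ℕ) : ∀ {n : ℕ}, Odd n → Odd (S x n) := by
  intro n hn
  obtain ⟨k, rfl⟩ := hn
  induction k with
  | zero => rw [show 2*0+1 = 1 from rfl, S_one]; exact odd_one
  | succ k ih =>
    rw [show 2*(k+1)+1 = (2*k+1)+1+1 from rfl, S_succ, S_succ]
    have he : Even (x ^ (2*k+1) + x ^ (2*k+1+1)) := by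
      rcases Nat.even_or_odd x with h | h
      · exact (Nat.even_pow.mpr ⟨h, by omega⟩).add (Nat.even_pow.mpr ⟨h, by omega⟩)
      · exact (h.pow).add_odd (h.pow)
    rw [add_assoc]
    exact ih.add_even he

lemma dvd_pow_add_one {x m : ℕ} (hm : Odd m) : (x + 1) ∣ x ^ m + 1 := by
  have h0 : ((x + 1 : ℕ) : ZMod (x+1)) = 0 := by exact_mod_cast ZMod.natCast_self (x+1)
  have hx : ((x : ℕ) : ZMod (x+1)) = -1 := by push_cast at h0; linear_combination h0
  rw [← ZMod.natCast_eq_zero_iff]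
  push_cast
  rw [hx, hm.neg_one_pow]
  ring

lemma Bodd {x : ℕ} (hx : Odd x) : ∀ {m : ℕ}, Odd m → Odd ((x ^ m + 1) / (x + 1)) := by
  have hx1 : 1 ≤ x := hx.pos
  intro m hm
  obtain ⟨k, rfl⟩ := hm
  induction k with
  | zero => simpa using Nat.div_self (show 0 < x + 1 by omega)
  | succ k ih =>
    have hdk : (x+1) ∣ x ^ (2*k+1) + 1 := dvd_pow_add_one ⟨k, rfl⟩
    have hdm : (x+1) ∣ x ^ (2*(k+1)+1) + 1 := dvd_pow_add_one ⟨k+1, rfl⟩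
    set a := (x ^ (2*k+1) + 1) / (x+1) with ha_def
    set b := (x ^ (2*(k+1)+1) + 1) / (x+1) with hb_def
    have ha : (x+1) * a = x ^ (2*k+1) + 1 := Nat.mul_div_cancel' hdk
    have hb : (x+1) * b = x ^ (2*(k+1)+1) + 1 := Nat.mul_div_cancel' hdm
    have hkey : (x+1) * b + (x+1) * (x - 1) = x^2 * ((x+1) * a) := by
      rw [ha, hb]
      have h1 : (x+1) * (x - 1) = x^2 - 1 := by
        obtain ⟨z, hz⟩ := Nat.exists_eq_add_of_le hx1
        subst hz
        have : (1+z+1) * (1+z-1) + 1 = (1+z)^2 := by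
          have hz1 : 1+z-1 = z := by omega
          rw [hz1]; ring
        omega
      have h2 : x ^ (2*(k+1)+1) + x^2 = x^2 * (x ^ (2*k+1) + 1) := by ring
      have h3 : 1 ≤ x^2 := Nat.one_le_pow _ _ (by omega)
      omega
    have hb_eq : b + (x - 1) = x^2 * a := by
      have : (x+1) * (b + (x-1)) = (x+1) * (x^2 * a) := by
        rw [Nat.mul_add]
        rw [hkey]
        ring
      exact Nat.eq_of_mul_eq_mul_left (by omega) this
    -- parity
    have hao : Odd a := ih
    have hx2a : Odd (x^2 * a) := (hx.pow).mul hao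
    have hxm1 : Even (x - 1) := by
      obtain ⟨c, hc⟩ := hx
      exact ⟨c, by omega⟩
    rcases Nat.even_or_odd b with hb' | hb'
    · exfalso
      obtain ⟨c1, hc1⟩ := hb'
      obtain ⟨c2, hc2⟩ := hxm1
      obtain ⟨c3, hc3⟩ := hx2a
      omega
    · exact hb'

lemma B_gt_one {x m : ℕ} (hx : 2 ≤ x) (hm : 3 ≤ m) (hmo : Odd m) :
    1 < (x ^ m + 1) / (x + 1) := by
  have hd := dvd_pow_add_one (x := x) hmo
  have h := Nat.mul_div_cancel' hd
  set B := (x ^ m + 1) / (x + 1) with hB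
  have hx3 : x^3 ≤ x^m := Nat.pow_le_pow_right (by omega) hm
  have hxx : x^3 = x*(x*x) := by ring
  have h4 : 4 * x ≤ x * (x * x) := by nlinarith
  rcases Nat.lt_or_ge 1 B with h1 | h1
  · exact h1
  · exfalso
    interval_cases B <;> omega

lemma CB (x m : ℕ) (hm : Odd m) :
    S x m * ((x ^ m + 1) / (x + 1)) = S (x^2) m := by
  have hd := dvd_pow_add_one (x := x) hm
  apply Nat.eq_of_mul_eq_mul_left (show 0 < x + 1 by omega)
  calc (x+1) * (S x m * ((x^m+1)/(x+1)))
      = S x m * ((x+1) * ((x^m+1)/(x+1))) := by ring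
    _ = S x m * (x^m+1) := by rw [Nat.mul_div_cancel' hd]
    _ = S x m + x^m * S x m := by ring
    _ = S x (2*m) := by rw [two_mul, ← Sadd]
    _ = (x+1) * S (x^2) m := (Sdouble x m).symm

lemma minFac_odd_prime {k : ℕ} (hk : Odd k) (h1 : 1 < k) :
    k.minFac.Prime ∧ Odd k.minFac ∧ k.minFac ∣ k := by
  have hp := Nat.minFac_prime (show k ≠ 1 by omega)
  refine ⟨hp, ?_, Nat.minFac_dvd k⟩
  rcases hp.eq_two_or_odd' with h | h
  · exfalso
    have hd := Nat.minFac_dvd k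
    rw [h] at hd
    obtain ⟨c, hc⟩ := hd
    obtain ⟨c2, hc2⟩ := hk
    omega
  · exact h

lemma oddsq_mod4 {y : ℕ} (hy : Odd y) : y^2 % 4 = 1 := by
  obtain ⟨c, rfl⟩ := hy
  have : (2*c+1)^2 = 4*(c*c+c)+1 := by ring
  omega

lemma exodd {x n : ℕ} (hx : 2 ≤ x) (hne : Even n) (hn0 : n ≠ 0) :
    ∃ ℓ : ℕ, ℓ.Prime ∧ Odd ℓ ∧ ℓ ∣ x ^ n + 1 := by
  rcases Nat.even_or_odd x with hxe | hxo
  · have hodd : Odd (x ^ n + 1) := (Nat.even_pow.mpr ⟨hxe, hn0⟩).add_one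
    have hp1 : 0 < x ^ n := pow_pos (by omega) _
    obtain ⟨hp, ho, hd⟩ := minFac_odd_prime hodd (by omega)
    exact ⟨_, hp, ho, hd⟩
  · have hn2 : 2 ≤ n := by
      rcases Nat.lt_or_ge n 2 with h | h
      · interval_cases n
        · omega
        · exact absurd hne (by simp)
      · exact h
    have h4 : x ^ n % 4 = 1 := by
      have hhalf : x ^ n = (x ^ (n/2))^2 := by
        rw [← pow_mul]
        congr 1
        obtain ⟨c, rfl⟩ := hne
        omega
      rw [hhalf]
      exact oddsq_mod4 (hxo.pow)
    have hdvd2 : 2 * ((x ^ n + 1) / 2) = x ^ n + 1 := by omega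
    set t := (x ^ n + 1) / 2 with ht_def
    have hto : Odd t := by
      rcases Nat.even_or_odd t with h | h
      · exfalso; obtain ⟨c, hc⟩ := h; omega
      · exact h
    have hxn4 : 4 ≤ x ^ n := by
      have h1 : x^2 ≤ x^n := Nat.pow_le_pow_right (by omega) hn2
      have h2 : 2^2 ≤ x^2 := Nat.pow_le_pow_left hx 2
      omega
    obtain ⟨hp, ho, hd⟩ := minFac_odd_prime hto (by omega)
    exact ⟨_, hp, ho, hd.trans ⟨2, by omega⟩⟩

lemma pow2_or_odd : ∀ k : ℕ, 0 < k →
    (∃ ℓ : ℕ, ℓ.Prime ∧ Odd ℓ ∧ ℓ ∣ k) ∨ ∃ t : ℕ, k = 2 ^ t := by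
  intro k
  induction k using Nat.strong_induction_on with
  | _ k ih =>
    intro hk
    rcases Nat.even_or_odd k with he | ho
    · obtain ⟨c, hc⟩ := he
      have hc2 : k = 2 * c := by omega
      have hc0 : 0 < c := by omega
      rcases ih c (by omega) hc0 with ⟨ℓ, h1, h2, h3⟩ | ⟨t, ht⟩
      · exact Or.inl ⟨ℓ, h1, h2, h3.trans ⟨2, by omega⟩⟩
      · exact Or.inr ⟨t+1, by rw [hc2, ht]; ring⟩
    · by_cases h1 : k = 1
      · exact Or.inr ⟨0, by simp [h1]⟩
      · obtain ⟨hp, ho', hd⟩ := minFac_odd_prime ho (by omega)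
        exact Or.inl ⟨_, hp, ho', hd⟩

lemma neg_one_ne_one_zmod {ℓ : ℕ} (hℓ : ℓ.Prime) (h2 : ℓ ≠ 2) : (-1 : ZMod ℓ) ≠ 1 := by
  intro hcon
  have h0 : ((2 : ℕ) : ZMod ℓ) = 0 := by push_cast; linear_combination -hcon
  have hdvd : ℓ ∣ 2 := (ZMod.natCast_eq_zero_iff 2 ℓ).mp h0
  exact h2 ((Nat.prime_dvd_prime_iff_eq hℓ Nat.prime_two).mp hdvd)

lemma two_adic_of_pow_eq_neg_one {ℓ n : ℕ} (hℓ : ℓ.Prime) (h2 : ℓ ≠ 2) {x : ZMod ℓ}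
    (hn : 0 < n) (h : x ^ n = -1) :
    (orderOf x).factorization 2 = n.factorization 2 + 1 := by
  have hne := neg_one_ne_one_zmod hℓ h2
  have hx2n : x ^ (2*n) = 1 := by
    rw [mul_comm, pow_mul, h]
    exact neg_one_sq
  have he : orderOf x ∣ 2*n := orderOf_dvd_of_pow_eq_one hx2n
  have hnn : ¬ orderOf x ∣ n := by
    intro hd
    exact hne (h ▸ orderOf_dvd_iff_pow_eq_one.mp hd)
  set e := orderOf x with he_def
  have he0 : e ≠ 0 := by
    intro h0
    rw [h0] at he
    have := Nat.eq_zero_of_zero_dvd he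
    omega
  have hn0 : n ≠ 0 := by omega
  have hf : e.factorization ≤ (2*n).factorization :=
    (Nat.factorization_le_iff_dvd he0 (by positivity)).mpr he
  have hf2 : (2*n).factorization = (2:ℕ).factorization + n.factorization :=
    Nat.factorization_mul (by norm_num) hn0
  have h2f : (2:ℕ).factorization = Finsupp.single 2 1 := Nat.Prime.factorization Nat.prime_two
  have hle : e.factorization 2 ≤ n.factorization 2 + 1 := by
    have := Finsupp.le_def.mp hf 2
    rw [hf2, Finsupp.add_apply, h2f, Finsupp.single_apply, if_pos rfl] at this
    omega
  by_contra hne2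
  have hlt : e.factorization 2 ≤ n.factorization 2 := by omega
  apply hnn
  rw [← Nat.factorization_le_iff_dvd he0 hn0]
  refine Finsupp.le_def.mpr fun r => ?_
  by_cases hr : r = 2
  · subst hr; exact hlt
  · have hh := Finsupp.le_def.mp hf r
    rw [hf2, Finsupp.add_apply, h2f, Finsupp.single_apply, if_neg (fun hcon => hr hcon.symm)] at hh
    simpa using hh

lemma f2_orderOf_pow {ℓ : ℕ} {x : ZMod ℓ} {s : ℕ} (hs : s ≠ 0) :
    (orderOf (x ^ s)).factorization 2 =
      (orderOf x).factorization 2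
        - min ((orderOf x).factorization 2) (s.factorization 2) := by
  rcases eq_or_ne (orderOf x) 0 with he | he
  · rw [orderOf_pow' x hs, he]
    simp
  · rw [orderOf_pow' x hs,
      Nat.factorization_div (Nat.gcd_dvd_left (orderOf x) s),
      Nat.factorization_gcd he hs]
    rw [Finsupp.tsub_apply, Finsupp.inf_apply]

lemma pow_eq_one_of_dvd_geom {ℓ x r : ℕ} (h : ℓ ∣ S x r) : ((x : ZMod ℓ)) ^ r = 1 := by
  have h0 : ((S x r : ℕ) : ZMod ℓ) = 0 := (ZMod.natCast_eq_zero_iff _ _).mpr h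
  have hsum : (∑ i ∈ Finset.range r, ((x : ZMod ℓ)) ^ i) = 0 := by
    rw [S] at h0
    push_cast at h0
    exact h0
  have hg := geom_sum_mul ((x : ZMod ℓ)) r
  rw [hsum, zero_mul] at hg
  have := eq_of_sub_eq_zero hg.symm
  exact this

lemma pow_eq_neg_one_of_dvd {ℓ x n : ℕ} (h : ℓ ∣ x ^ n + 1) :
    ((x : ZMod ℓ)) ^ n = -1 := by
  have h0 : ((x ^ n + 1 : ℕ) : ZMod ℓ) = 0 := (ZMod.natCast_eq_zero_iff _ _).mpr h
  push_cast at h0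
  linear_combination h0

lemma q1_dvd {x n : ℕ} (h : 2 ∣ n) : (x + 1) ∣ S x n := by
  obtain ⟨k, rfl⟩ := h
  exact ⟨S (x^2) k, (Sdouble x k).symm⟩

lemma S_sq_dvd {x n : ℕ} (h : 2 ∣ n) : S (x^2) (n / 2) ∣ S x n := by
  obtain ⟨k, rfl⟩ := h
  rw [Nat.mul_div_cancel_left k (by norm_num)]
  exact ⟨x + 1, by rw [← Sdouble]; ring⟩

lemma q2_dvd {x n : ℕ} (h : 4 ∣ n) : (x^2 + 1) ∣ S x n := by
  have h2 : 2 ∣ n := dvd_trans (by norm_num) h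
  have h2' : 2 ∣ n / 2 := by omega
  exact (q1_dvd h2').trans (S_sq_dvd h2)

lemma q4_dvd {x n : ℕ} (h : 8 ∣ n) : (x^4 + 1) ∣ S x n := by
  have h2 : 2 ∣ n := dvd_trans (by norm_num) h
  have h4' : 4 ∣ n / 2 := by omega
  have hh : ((x^2)^2 + 1) ∣ S (x^2) (n/2) := q2_dvd h4'
  have heq : (x^2)^2 = x^4 := by ring
  rw [heq] at hh
  exact hh.trans (S_sq_dvd h2)

lemma rad_dvd (n : ℕ) : (∏ ℓ ∈ n.primeFactors, ℓ) ∣ n := Nat.prod_primeFactors_dvd n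

lemma prime_dvd_rad {ℓ n : ℕ} (hn : n ≠ 0) (hℓ : ℓ.Prime) (h : ℓ ∣ n) :
    ℓ ∣ ∏ q ∈ n.primeFactors, q :=
  Finset.dvd_prod_of_mem _ (Nat.mem_primeFactors.mpr ⟨hℓ, h, hn⟩)

lemma rad_dvd_of {n k : ℕ} (h : ∀ ℓ ∈ n.primeFactors, ℓ ∣ k) :
    (∏ ℓ ∈ n.primeFactors, ℓ) ∣ k :=
  Finset.prod_primes_dvd k (fun q hq => (Nat.prime_of_mem_primeFactors hq).prime) h

lemma key_V {p j R ℓ : ℕ} (hR : ((p : ℕ) : ZMod R) ^ j = -1) (hℓ : ℓ.Prime) (h2 : ℓ ≠ 2)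
    (hdvd : ℓ ∣ R) (hj : 0 < j) :
    (orderOf ((p : ZMod ℓ))).factorization 2 = j.factorization 2 + 1 := by
  have hmap := congrArg (ZMod.castHom hdvd (ZMod ℓ)) hR
  rw [map_pow, map_natCast, map_neg, map_one] at hmap
  exact two_adic_of_pow_eq_neg_one hℓ h2 hj hmap


lemma two_pow_facts {q t : ℕ} (hq2 : 2 ≤ q) (ht : q + 1 = 2 ^ t) :
    2 ≤ t ∧ q % 4 = 3 ∧ q % 2 = 1 := by
  have ht2 : 2 ≤ t := by
    by_contra h
    have : t = 0 ∨ t = 1 := by omega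
    rcases this with rfl | rfl <;> norm_num at ht <;> omega
  have h4 : (2:ℕ)^t = 4 * 2^(t-2) := by
    rw [show t = 2 + (t-2) by omega, pow_add]
    norm_num
  omega

lemma s_odd_of_q3 {p s : ℕ} (hpodd : Odd p) (h3 : (p ^ s) % 4 = 3) : Odd s := by
  rcases Nat.even_or_odd s with hse | hso
  · exfalso
    obtain ⟨c, hc⟩ := hse
    have hq : p ^ s = (p ^ c) ^ 2 := by
      rw [← pow_mul]
      congr 1
      omega
    have := oddsq_mod4 (hpodd.pow (n := c))
    rw [hq] at h3
    omega
  · exact hso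

lemma p_ne_two {p s q t : ℕ} (hp : p.Prime) (hs : 0 < s) (hq : q = p ^ s) (hq2 : 2 ≤ q)
    (ht : q + 1 = 2 ^ t) : Odd p := by
  rcases hp.eq_two_or_odd' with rfl | h
  · exfalso
    have h2q : 2 ∣ q := by rw [hq]; exact dvd_pow_self 2 hs.ne'
    have := (two_pow_facts hq2 ht).2.2
    omega
  · exact h

lemma S_two (q : ℕ) : S q 2 = q + 1 := by
  rw [S, Finset.sum_range_succ, Finset.sum_range_one]
  ring

lemma S_four (p : ℕ) : S p 4 = (p + 1) * (p ^ 2 + 1) := by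
  rw [S, Finset.sum_range_succ, Finset.sum_range_succ, Finset.sum_range_succ,
    Finset.sum_range_one]
  ring

lemma mersenne_core {p L : ℕ} (hp : p.Prime) (hL : L.Prime) (hpL : p = 2 ^ L - 1) :
    ((p : ℕ) : ZMod (Rad ((p ^ 4 - 1) / (p - 1)))) ^ 2 = -1 := by
  have hL2 : 2 ≤ L := hL.two_le
  have h2L : (4:ℕ) ≤ 2 ^ L := by
    calc (4:ℕ) = 2^2 := by norm_num
    _ ≤ 2^L := Nat.pow_le_pow_right (by norm_num) hL2
  have hp3 : 3 ≤ p := by omega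
  have hpodd : Odd p := by
    have h2d : (2:ℕ) ∣ 2 ^ L := dvd_pow_self 2 (by omega)
    obtain ⟨c, hc⟩ := h2d
    rw [Nat.odd_iff]
    omega
  have hNval : (p ^ 4 - 1) / (p - 1) = S p 4 := Nval p 4 (by omega)
  rw [hNval]
  have hN0 : S p 4 ≠ 0 := (Spos p 4 (by omega) (by omega)).ne'
  have hRd : Rad (S p 4) ∣ p ^ 2 + 1 := by
    apply rad_dvd_of
    intro ℓ hmem
    have hlp := Nat.prime_of_mem_primeFactors hmem
    have hld := Nat.dvd_of_mem_primeFactors hmem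
    rw [S_four] at hld
    rcases hlp.dvd_mul.mp hld with h | h
    · have hp1 : p + 1 = 2 ^ L := by omega
      have h2 : ℓ ∣ 2 ^ L := hp1 ▸ h
      have hℓ2 : ℓ = 2 :=
        (Nat.prime_dvd_prime_iff_eq hlp Nat.prime_two).mp (hlp.dvd_of_dvd_pow h2)
      rw [hℓ2]
      have : Even (p ^ 2 + 1) := (hpodd.pow).add_one
      exact this.two_dvd
    · exact h
  exact pow_eq_neg_one_of_dvd hRd

lemma hard {p s m q j : ℕ} (hp : p.Prime) (hs : 0 < s) (hm : 1 < m) (hq : q = p ^ s)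
    (hj : 0 < j) (hjh : ((p : ℕ) : ZMod (Rad ((q ^ m - 1) / (q - 1)))) ^ j = -1)
    (hm2 : m ≠ 2) :
    s = 1 ∧ (∃ L : ℕ, L.Prime ∧ p = 2 ^ L - 1) ∧ m = 4 := by
  have hp2 := hp.two_le
  have hq2 : 2 ≤ q := by
    rw [hq]
    exact le_trans hp2 (Nat.le_self_pow hs.ne' p)
  rw [Nval q m hq2] at hjh
  set N := S q m with hN
  have hN0 : N ≠ 0 := (Spos q m (by omega) (by omega)).ne'
  have keyA : ∀ ℓ : ℕ, ℓ.Prime → Odd ℓ → ℓ ∣ N →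
      (orderOf ((p : ZMod ℓ))).factorization 2 = j.factorization 2 + 1 := by
    intro ℓ h1 h2 h3
    have hl2 : ℓ ≠ 2 := by obtain ⟨c, hc⟩ := h2; omega
    exact key_V hjh h1 hl2 (prime_dvd_rad hN0 h1 h3) hj
  have site1 : ∀ u r ℓ : ℕ, 0 < u → Odd r → ℓ.Prime → Odd ℓ → ℓ ∣ N → ℓ ∣ S (p ^ u) r →
      j.factorization 2 + 1 ≤ u.factorization 2 := by
    intro u r ℓ hu hr h1 h2 h3 h4
    have hV := keyA ℓ h1 h2 h3
    have hpow : (((p : ZMod ℓ)) ^ u) ^ r = 1 := by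
      have := pow_eq_one_of_dvd_geom (ℓ := ℓ) (x := p ^ u) (r := r) h4
      push_cast at this
      exact this
    have hdvd : orderOf ((p : ZMod ℓ) ^ u) ∣ r := orderOf_dvd_of_pow_eq_one hpow
    have hf0 : (orderOf ((p : ZMod ℓ) ^ u)).factorization 2 = 0 := by
      apply Nat.factorization_eq_zero_of_not_dvd
      intro h2d
      obtain ⟨c, hc⟩ := hr
      obtain ⟨d, hd⟩ := h2d.trans hdvd
      omega
    have hT := f2_orderOf_pow (ℓ := ℓ) (x := (p : ZMod ℓ)) (s := u) hu.ne'
    omega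
  have site2 : ∀ u n ℓ : ℕ, 0 < u → 0 < n → ℓ.Prime → Odd ℓ → ℓ ∣ N → ℓ ∣ (p ^ u) ^ n + 1 →
      j.factorization 2 + 1 = u.factorization 2 + (n.factorization 2 + 1) := by
    intro u n ℓ hu hn h1 h2 h3 h4
    have hV := keyA ℓ h1 h2 h3
    have hl2 : ℓ ≠ 2 := by obtain ⟨c, hc⟩ := h2; omega
    have hx : (((p : ZMod ℓ)) ^ u) ^ n = -1 := by
      have := pow_eq_neg_one_of_dvd (ℓ := ℓ) (x := p ^ u) (n := n) h4
      push_cast at this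
      exact this
    have hdn := two_adic_of_pow_eq_neg_one h1 hl2 hn hx
    have hT := f2_orderOf_pow (ℓ := ℓ) (x := (p : ZMod ℓ)) (s := u) hu.ne'
    omega
  rcases Nat.even_or_odd m with hme | hmo
  · -- m even
    rcases pow2_or_odd m (by omega) with ⟨r, hrp, hro, hrd⟩ | ⟨γ, hγ⟩
    · -- m has an odd prime factor r
      exfalso
      have hr3 : 3 ≤ r := by
        have := hrp.two_le
        obtain ⟨c, hc⟩ := hro
        omega
      have hSr_odd : Odd (S q r) := Sodd q hro
      have hSr1 : 1 < S q r := by have := Sgt1 q r hq2 (by omega); omega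
      obtain ⟨hp6, ho6, hd6⟩ := minFac_odd_prime hSr_odd hSr1
      have h6N : (S q r).minFac ∣ N := hd6.trans (Sdvd q hrd)
      have e6 := site1 s r _ hs hro hp6 ho6 h6N (hq ▸ hd6)
      by_cases h4 : 4 ∣ m
      · obtain ⟨ℓ, h1, h2, h3⟩ := exodd hq2 (by decide : Even 2) (by norm_num)
        have hℓN : ℓ ∣ N := h3.trans (q2_dvd h4)
        have e7 := site2 s 2 ℓ hs (by norm_num) h1 h2 hℓN (hq ▸ h3)
        have h22 : (2:ℕ).factorization 2 = 1 := Nat.Prime.factorization_self Nat.prime_two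
        omega
      · have h2m : 2 ∣ m := by
          obtain ⟨c, hc⟩ := hme
          exact ⟨c, by omega⟩
        rcases pow2_or_odd (q + 1) (by omega) with ⟨ℓ, h1, h2, h3⟩ | ⟨t, ht⟩
        · have hℓN : ℓ ∣ N := h3.trans (q1_dvd h2m)
          have e7 := site2 s 1 ℓ hs (by norm_num) h1 h2 hℓN
            (by rw [pow_one, ← hq]; exact h3)
          have h12 : (1:ℕ).factorization 2 = 0 := by simp
          omega
        · obtain ⟨ht2, hq4, hq1⟩ := two_pow_facts hq2 ht
          have hpodd : Odd p := p_ne_two hp hs hq hq2 ht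
          have hso : Odd s := s_odd_of_q3 hpodd (by rw [← hq]; exact hq4)
          have hf2s : s.factorization 2 = 0 := by
            apply Nat.factorization_eq_zero_of_not_dvd
            obtain ⟨c, hc⟩ := hso
            omega
          omega
    · -- m = 2 ^ γ
      have hγ2 : 2 ≤ γ := by
        by_contra hcon
        have : γ = 0 ∨ γ = 1 := by omega
        rcases this with rfl | rfl <;> simp [hγ] at * <;> omega
      have h4m : 4 ∣ m := by
        have : m = 4 * 2 ^ (γ - 2) := by
          rw [hγ, show γ = 2 + (γ - 2) by omega, pow_add]
          norm_num
        exact ⟨_, this⟩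
      obtain ⟨ℓa, ha1, ha2, ha3⟩ := exodd hq2 (by decide : Even 2) (by norm_num)
      have haN : ℓa ∣ N := ha3.trans (q2_dvd h4m)
      have ea := site2 s 2 ℓa hs (by norm_num) ha1 ha2 haN (hq ▸ ha3)
      have h22 : (2:ℕ).factorization 2 = 1 := Nat.Prime.factorization_self Nat.prime_two
      by_cases h8 : 8 ∣ m
      · exfalso
        obtain ⟨ℓb, hb1, hb2, hb3⟩ := exodd hq2 (by decide : Even 4) (by norm_num)
        have hbN : ℓb ∣ N := hb3.trans (q4_dvd h8)
        have eb := site2 s 4 ℓb hs (by norm_num) hb1 hb2 hbN (hq ▸ hb3)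
        have h42 : (4:ℕ).factorization 2 = 2 := by
          rw [show (4:ℕ) = 2^2 by norm_num, Nat.factorization_pow]
          simp [Nat.Prime.factorization_self Nat.prime_two]
        omega
      · have hm4 : m = 4 := by
          have hγ3 : γ < 3 := by
            by_contra hcon
            apply h8
            have : m = 8 * 2 ^ (γ - 3) := by
              rw [hγ, show γ = 3 + (γ - 3) by omega, pow_add]
              norm_num
            exact ⟨_, this⟩
          have : γ = 2 := by omega
          rw [hγ, this]
          norm_num
        rcases pow2_or_odd (q + 1) (by omega) with ⟨ℓc, hc1, hc2, hc3⟩ | ⟨t, ht⟩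
        · exfalso
          have hcN : ℓc ∣ N := hc3.trans (q1_dvd (by rw [hm4]; norm_num))
          have ec := site2 s 1 ℓc hs (by norm_num) hc1 hc2 hcN
            (by rw [pow_one, ← hq]; exact hc3)
          have h12 : (1:ℕ).factorization 2 = 0 := by simp
          omega
        · obtain ⟨ht2, hq4, hq1⟩ := two_pow_facts hq2 ht
          have hpodd : Odd p := p_ne_two hp hs hq hq2 ht
          have hso : Odd s := s_odd_of_q3 hpodd (by rw [← hq]; exact hq4)
          have hs1 : s = 1 := by
            by_contra hs1
            have hs3 : 3 ≤ s := by obtain ⟨c, hc⟩ := hso; omega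
            have hBo : Odd ((p ^ s + 1) / (p + 1)) := Bodd hpodd hso
            have hB1 : 1 < (p ^ s + 1) / (p + 1) := B_gt_one hp2 hs3 hso
            have hBd : ((p ^ s + 1) / (p + 1)) ∣ 2 ^ t := by
              have h1 : ((p ^ s + 1) / (p + 1)) ∣ p ^ s + 1 :=
                Nat.div_dvd_of_dvd (dvd_pow_add_one hso)
              have h2 : p ^ s + 1 = 2 ^ t := by rw [← hq]; exact ht
              rw [← h2]
              exact h1
            have h2nd : ¬ 2 ∣ ((p ^ s + 1) / (p + 1)) := by
              obtain ⟨c, hc⟩ := hBo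
              omega
            have hcop : Nat.Coprime ((p ^ s + 1) / (p + 1)) 2 :=
              ((Nat.Prime.coprime_iff_not_dvd Nat.prime_two).mpr h2nd).symm
            have := Nat.Coprime.eq_one_of_dvd (hcop.pow_right t) hBd
            omega
          refine ⟨hs1, ?_, hm4⟩
          have hqp : q = p := by rw [hq, hs1, pow_one]
          have hpt : p = 2 ^ t - 1 := by omega
          have hTP := Nat.prime_of_pow_sub_one_prime (show t ≠ 1 by omega)
            (by rw [← hpt]; exact hp)
          exact ⟨t, hTP.2, hpt⟩
  · -- m odd
    exfalso
    rcases Nat.even_or_odd s with hse | hso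
    · obtain ⟨s', hs'⟩ := hse
      have hs'' : s = 2 * s' := by omega
      have hs'0 : 0 < s' := by omega
      set Q := p ^ s' with hQ
      have hQ2 : 2 ≤ Q := le_trans hp2 (Nat.le_self_pow hs'0.ne' p)
      have hqQ : q = Q ^ 2 := by rw [hq, hs'', hQ, ← pow_mul, Nat.mul_comm]
      have hNQ : N = S (Q ^ 2) m := by rw [hN, hqQ]
      have hCBN : S Q m * ((Q ^ m + 1) / (Q + 1)) = N := by rw [hNQ]; exact CB Q m hmo
      have hCodd : Odd (S Q m) := Sodd Q hmo
      have hC1 : 1 < S Q m := by have := Sgt1 Q m hQ2 (by omega); omega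
      obtain ⟨hp3, ho3, hd3⟩ := minFac_odd_prime hCodd hC1
      have h3N : (S Q m).minFac ∣ N := hd3.trans ⟨(Q ^ m + 1) / (Q + 1), hCBN.symm⟩
      have e3 := site1 s' m _ hs'0 hmo hp3 ho3 h3N (hQ ▸ hd3)
      set B := (Q ^ m + 1) / (Q + 1) with hB
      have hBdvd : (Q + 1) * B = Q ^ m + 1 := Nat.mul_div_cancel' (dvd_pow_add_one hmo)
      have hBodd : Odd B := by
        rcases Nat.even_or_odd Q with hQe | hQo
        · have hQm1 : Odd (Q ^ m + 1) := (Nat.even_pow.mpr ⟨hQe, by omega⟩).add_one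
          rcases Nat.even_or_odd B with hBe | hBo
          · exfalso
            have : Even ((Q + 1) * B) := hBe.mul_left (Q + 1)
            rw [hBdvd] at this
            exact (Nat.not_even_iff_odd.mpr hQm1) this
          · exact hBo
        · exact Bodd hQo hmo
      have hB1 : 1 < B := B_gt_one hQ2 (by omega) hmo
      obtain ⟨hp4, ho4, hd4⟩ := minFac_odd_prime hBodd hB1
      have h4N : B.minFac ∣ N := hd4.trans ⟨S Q m, by rw [← hCBN]; ring⟩
      have h4B : B.minFac ∣ (p ^ s') ^ m + 1 := by
        have : B.minFac ∣ Q ^ m + 1 := hd4.trans ⟨Q + 1, by rw [← hBdvd]; ring⟩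
        exact hQ ▸ this
      have e4 := site2 s' m _ hs'0 (by omega) hp4 ho4 h4N h4B
      have hf2m : m.factorization 2 = 0 := by
        apply Nat.factorization_eq_zero_of_not_dvd
        obtain ⟨c, hc⟩ := hmo
        omega
      omega
    · have hNodd : Odd N := by rw [hN]; exact Sodd q hmo
      have hN1 : 1 < N := by rw [hN]; have := Sgt1 q m hq2 (by omega); omega
      obtain ⟨hp5, ho5, hd5⟩ := minFac_odd_prime hNodd hN1
      have hd5' : N.minFac ∣ S (p ^ s) m := by
        rw [← hq, ← hN]
        exact hd5
      have e5 := site1 s m _ hs hmo hp5 ho5 hd5 hd5' 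
      have hf2s : s.factorization 2 = 0 := by
        apply Nat.factorization_eq_zero_of_not_dvd
        obtain ⟨c, hc⟩ := hso
        omega
      omega

end Stmt6Aux

open Stmt6Aux

/-- the semi-primitive condition modulo `Rad(Q)` holds iff `m = 2` or
`q = p` is a Mersenne prime and `m = 4`; in the latter case exactly for `j = 2k`, `k` odd. -/
theorem stmt_6 (p s m q : ℕ) (hp : p.Prime) (hs : 0 < s) (hm : 1 < m) (hq : q = p ^ s) :
    ((∃ j : ℕ, 0 < j ∧ (p : ZMod (Rad ((q ^ m - 1) / (q - 1)))) ^ j = -1) ↔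
      (m = 2 ∨ (s = 1 ∧ (∃ ℓ : ℕ, ℓ.Prime ∧ p = 2 ^ ℓ - 1) ∧ m = 4))) ∧
    ((∃ ℓ : ℕ, ℓ.Prime ∧ p = 2 ^ ℓ - 1) →
      ∀ j : ℕ, 0 < j →
        ((p : ZMod (Rad ((p ^ 4 - 1) / (p - 1)))) ^ j = -1 ↔
          ∃ k : ℕ, Odd k ∧ j = 2 * k)) := by
  constructor
  · constructor
    · rintro ⟨j, hj, hjh⟩
      by_cases hm2 : m = 2
      · exact Or.inl hm2
      · exact Or.inr (hard hp hs hm hq hj hjh hm2)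
    · rintro (hm2 | ⟨hs1, ⟨L, hL, hpL⟩, hm4⟩)
      · subst hm2
        have hq2 : 2 ≤ q :=
          le_trans hp.two_le (by rw [hq]; exact Nat.le_self_pow hs.ne' p)
        refine ⟨s, hs, ?_⟩
        rw [Nval q 2 hq2, S_two]
        have hRd : Rad (q + 1) ∣ q + 1 := rad_dvd _
        have h0 : ((q + 1 : ℕ) : ZMod (Rad (q + 1))) = 0 :=
          (ZMod.natCast_eq_zero_iff _ _).mpr hRd
        have hq1 : ((q : ℕ) : ZMod (Rad (q + 1))) = -1 := by
          push_cast at h0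
          linear_combination h0
        calc ((p : ℕ) : ZMod (Rad (q + 1))) ^ s = ((p ^ s : ℕ) : ZMod (Rad (q + 1))) := by
              push_cast; ring
          _ = ((q : ℕ) : ZMod (Rad (q + 1))) := by rw [hq]
          _ = -1 := hq1
      · subst hm4
        subst hs1
        have hqp : q = p := by rw [hq, pow_one]
        subst hqp
        exact ⟨2, by norm_num, mersenne_core hp hL hpL⟩
  · rintro ⟨L, hL, hpL⟩ j hj
    have hcore := mersenne_core hp hL hpL
    constructor
    · intro hpj
      have hL2 := hL.two_le
      have h2L : (4:ℕ) ≤ 2 ^ L := by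
        calc (4:ℕ) = 2^2 := by norm_num
        _ ≤ 2^L := Nat.pow_le_pow_right (by norm_num) hL2
      have hp2 : 2 ≤ p := hp.two_le
      have hNval : (p ^ 4 - 1) / (p - 1) = S p 4 := Nval p 4 hp2
      rw [hNval] at hpj
      have hN0 : S p 4 ≠ 0 := (Spos p 4 (by omega) (by omega)).ne'
      obtain ⟨ℓ, hℓp, hℓo, hℓd⟩ := exodd hp2 (by decide : Even 2) (by norm_num)
      have hℓN : ℓ ∣ S p 4 := hℓd.trans (by rw [S_four]; exact dvd_mul_left _ _)
      have hℓR : ℓ ∣ Rad (S p 4) := prime_dvd_rad hN0 hℓp hℓN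
      have hℓ2 : ℓ ≠ 2 := by obtain ⟨c, hc⟩ := hℓo; omega
      have hV := key_V hpj hℓp hℓ2 hℓR hj
      have hord := two_adic_of_pow_eq_neg_one hℓp hℓ2 (show 0 < 2 by norm_num)
        (pow_eq_neg_one_of_dvd hℓd)
      have h22 : (2:ℕ).factorization 2 = 1 := Nat.Prime.factorization_self Nat.prime_two
      have hf2j : j.factorization 2 = 1 := by omega
      have h2dj : 2 ∣ j := Nat.dvd_of_factorization_pos (by omega)
      obtain ⟨k, rfl⟩ := h2dj
      refine ⟨k, ?_, rfl⟩
      rcases Nat.even_or_odd k with hke | hko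
      · exfalso
        obtain ⟨c, hc⟩ := hke
        have h4d : (2:ℕ) ^ 2 ∣ 2 * k := ⟨c, by omega⟩
        have := (Nat.Prime.pow_dvd_iff_le_factorization Nat.prime_two
          (show 2 * k ≠ 0 by omega)).mp h4d
        omega
      · exact hko
    · rintro ⟨k, hko, rfl⟩
      rw [pow_mul, hcore, hko.neg_one_pow]
end

section
/- Let q be a power of a prime, m a positive integer, and N a positive divisor of q^m - 1 such that every prime divisor of N divides Q = (q^m - 1)/(q - 1). Then for every c ∈ F_q \ {0}, the number of N-free elements ξ ∈ F_{q^m} with Tr_{F_{q^m}/F_q}(ξ) = c is Z_{q,m,N}(c) = ( ((q^m - 1)/N)·φ(N) - Z_{q,m,N}(0) )/(q - 1); in particular this value is the same for all nonzero c ∈ F_q. -/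
open scoped BigOperators
open scoped Classical

lemma count_coprime_range_mul (N : ℕ) :
    ∀ c : ℕ, ((Finset.range (c * N)).filter (fun k => Nat.Coprime k N)).card = c * N.totient := by
  intro c
  induction c with
  | zero => simp
  | succ c ih =>
    have hsplit : Finset.range ((c + 1) * N) =
        Finset.range (c * N) ∪ Finset.Ico (c * N) (c * N + N) := by
      simp only [Finset.range_eq_Ico]
      rw [Finset.Ico_union_Ico_eq_Ico (Nat.zero_le _) (Nat.le_add_right _ _)]
      congr 1
      ring
    have hdisj : Disjoint (Finset.range (c * N)) (Finset.Ico (c * N) (c * N + N)) := by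
      simp only [Finset.disjoint_left, Finset.mem_range, Finset.mem_Ico]
      omega
    rw [hsplit, Finset.filter_union,
      Finset.card_union_of_disjoint (Finset.disjoint_filter_filter hdisj), ih]
    have h2 : (Finset.Ico (c * N) (c * N + N)).filter (fun k => Nat.Coprime k N)
        = (Finset.Ico (c * N) (c * N + N)).filter N.Coprime := by
      apply Finset.filter_congr
      intro x _
      exact Nat.coprime_comm
    rw [h2, Nat.filter_coprime_Ico_eq_totient]
    ring

/-- uniformity of `Z_{q,m,N}(c)` for nonzero `c` when `Rad(N) ∣ Q`. -/
theorem stmt_8 (p s m q Q N : ℕ) [Fact p.Prime] (hs : 0 < s) (hm : 0 < m)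
    (hq : q = p ^ s) (hQ : Q = (q ^ m - 1) / (q - 1))
    (K L : Type) [Field K] [Fintype K] [Field L] [Fintype L] [Algebra K L]
    (hK : Fintype.card K = q) (hL : Fintype.card L = q ^ m)
    (α : Lˣ) (hα : ∀ x : Lˣ, x ∈ Subgroup.zpowers α)
    (hN : N ∣ q ^ m - 1)
    (hrad : ∀ ℓ : ℕ, ℓ.Prime → ℓ ∣ N → ℓ ∣ Q) :
    ∀ c : K, c ≠ 0 →
      (Zcount K L α N c : ℚ) =
        ((((q ^ m - 1) / N : ℕ) : ℚ) * (Nat.totient N : ℚ) -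
          (Zcount K L α N (0 : K) : ℚ)) / ((q : ℚ) - 1) := by
  intro c hc
  set n : ℕ := q ^ m - 1 with hn
  have hp2 : 2 ≤ p := (Fact.out : p.Prime).two_le
  have hq2 : 2 ≤ q := by
    rw [hq]
    calc 2 ≤ p := hp2
    _ ≤ p ^ s := Nat.le_self_pow (by omega) p
  have hqm2 : 2 ≤ q ^ m := by
    calc 2 ≤ q := hq2
    _ ≤ q ^ m := Nat.le_self_pow (by omega) q
  have hn0 : 0 < n := by omega
  have hNpos : 0 < N := Nat.pos_of_dvd_of_pos hN hn0
  have hcardU : Fintype.card Lˣ = n := by rw [Fintype.card_units, hL]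
  have hord : orderOf α = n := by
    rw [orderOf_eq_card_of_forall_mem_zpowers hα, Nat.card_eq_fintype_card, hcardU]
  have hdvd1 : q - 1 ∣ n := by simpa using Nat.sub_dvd_pow_sub_pow q 1 m
  have hQn : Q * (q - 1) = n := by rw [hQ]; exact Nat.div_mul_cancel hdvd1
  have halphan : α ^ (n : ℤ) = 1 := by
    rw [zpow_natCast, ← hord]
    exact pow_orderOf_eq_one α
  have hzmod : ∀ j : ℤ, α ^ j = α ^ ((j % (n : ℤ)).toNat) := by
    intro j
    have hnn : (0 : ℤ) ≤ j % (n : ℤ) := Int.emod_nonneg j (by exact_mod_cast hn0.ne')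
    conv_lhs => rw [← Int.emod_add_mul_ediv j (n : ℤ)]
    rw [zpow_add, zpow_mul, halphan, one_zpow, mul_one, ← zpow_natCast,
      Int.toNat_of_nonneg hnn]
  have hfree : ∀ k : ℕ, IsNFree α (α ^ k) N ↔ Nat.Coprime k N := by
    intro k
    constructor
    · rintro ⟨j, hj, hjk⟩
      have hmod : k ≡ j [MOD N] := by
        have h1 : k ≡ j [MOD orderOf α] := pow_eq_pow_iff_modEq.1 hjk
        rw [hord] at h1
        exact h1.of_dvd hN
      have hg : Nat.gcd k N = Nat.gcd j N := by
        rw [Nat.gcd_comm k N, Nat.gcd_rec, hmod, ← Nat.gcd_rec, Nat.gcd_comm]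
      unfold Nat.Coprime at *
      rw [hg]; exact hj
    · intro h; exact ⟨k, h, rfl⟩
  have hshift : ∀ (t : ℤ) (ξ : Lˣ), IsNFree α ξ N → IsNFree α (α ^ ((Q : ℤ) * t) * ξ) N := by
    rintro t ξ ⟨k, hk, rfl⟩
    have heq : α ^ ((Q : ℤ) * t) * α ^ k = α ^ ((((Q : ℤ) * t + k) % (n : ℤ)).toNat) := by
      rw [← hzmod, zpow_add, zpow_natCast]
    refine ⟨_, ?_, heq⟩
    by_contra hcop
    obtain ⟨ℓ, hℓp, hℓ1, hℓ2⟩ := Nat.Prime.not_coprime_iff_dvd.1 hcop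
    have hℓQ : ℓ ∣ Q := hrad ℓ hℓp hℓ2
    have hℓn : ℓ ∣ n := hℓ2.trans hN
    have h1 : (ℓ : ℤ) ∣ ((Q : ℤ) * t + k) % (n : ℤ) := by
      have h := Int.natCast_dvd_natCast.2 hℓ1
      rwa [Int.toNat_of_nonneg (Int.emod_nonneg _ (by exact_mod_cast hn0.ne'))] at h
    have h2 : (ℓ : ℤ) ∣ (k : ℤ) := by
      have hd : ((Q : ℤ) * t + k) % (n : ℤ)
          = (Q : ℤ) * t + k - (n : ℤ) * (((Q : ℤ) * t + k) / (n : ℤ)) := Int.emod_def _ _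
      have hQ' : (ℓ : ℤ) ∣ (Q : ℤ) := Int.natCast_dvd_natCast.2 hℓQ
      have hn' : (ℓ : ℤ) ∣ (n : ℤ) := Int.natCast_dvd_natCast.2 hℓn
      have h3 : (ℓ : ℤ) ∣ (Q : ℤ) * t + (k : ℤ) := by
        rw [hd] at h1
        have h4 := dvd_add h1 (hn'.mul_right (((Q : ℤ) * t + k) / (n : ℤ)))
        simpa using h4
      have h5 := h3.sub (hQ'.mul_right t)
      simpa using h5
    have h6 : ℓ ∣ k := Int.natCast_dvd_natCast.1 h2
    have h7 : ℓ ∣ Nat.gcd k N := Nat.dvd_gcd h6 hℓ2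
    unfold Nat.Coprime at hk
    rw [hk] at h7
    exact hℓp.one_lt.ne' (Nat.dvd_one.1 h7)
  have hKpow : ∀ μ : K, μ ≠ 0 → ∃ t : ℤ, ((α ^ ((Q : ℤ) * t) : Lˣ) : L) = algebraMap K L μ := by
    intro μ hμ
    have hμL : algebraMap K L μ ≠ 0 := by
      simpa using (map_ne_zero (algebraMap K L)).2 hμ
    set u : Lˣ := Units.mk0 (algebraMap K L μ) hμL with hu
    have hμq : μ ^ (q - 1) = 1 := by
      rw [← hK]; exact FiniteField.pow_card_sub_one_eq_one μ hμ
    have hu1 : u ^ (q - 1) = 1 := by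
      apply Units.ext
      rw [Units.val_pow_eq_pow_val, Units.val_one, hu, Units.val_mk0, ← map_pow, hμq, map_one]
    obtain ⟨j, hj⟩ := Subgroup.mem_zpowers_iff.1 (hα u)
    have h1 : α ^ (j * ((q - 1 : ℕ) : ℤ)) = 1 := by
      rw [zpow_mul, hj, zpow_natCast, hu1]
    have hdvd : (n : ℤ) ∣ j * ((q - 1 : ℕ) : ℤ) := by
      rw [← hord]
      exact orderOf_dvd_iff_zpow_eq_one.2 h1
    have hQj : (Q : ℤ) ∣ j := by
      have hne : ((q - 1 : ℕ) : ℤ) ≠ 0 := by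
        exact_mod_cast (by omega : q - 1 ≠ 0)
      have h2 : (Q : ℤ) * ((q - 1 : ℕ) : ℤ) ∣ j * ((q - 1 : ℕ) : ℤ) := by
        rw [show (Q : ℤ) * ((q - 1 : ℕ) : ℤ) = (n : ℤ) from by exact_mod_cast hQn]
        exact hdvd
      exact (mul_dvd_mul_iff_right hne).1 h2
    obtain ⟨t, ht⟩ := hQj
    refine ⟨t, ?_⟩
    rw [← ht, hj, hu, Units.val_mk0]
  have htr_mul : ∀ (μ : K) (x : L),
      Algebra.trace K L (algebraMap K L μ * x) = μ * Algebra.trace K L x := by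
    intro μ x
    rw [← Algebra.smul_def, map_smul, smul_eq_mul]
  have hZfin : ∀ c₀ : K, Zcount K L α N c₀ =
      (Finset.univ.filter
        (fun ξ : Lˣ => IsNFree α ξ N ∧ Algebra.trace K L (ξ : L) = c₀)).card := by
    intro c₀
    rw [Zcount, ← Set.ncard_coe_finset]
    congr 1
    ext ξ
    simp
  have htot : (Finset.univ.filter (fun ξ : Lˣ => IsNFree α ξ N)).card
      = (n / N) * N.totient := by
    have h1 : ((Finset.range n).filter (fun k => Nat.Coprime k N)).card
        = (n / N) * N.totient := by
      have h := count_coprime_range_mul N (n / N)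
      rwa [Nat.div_mul_cancel hN] at h
    rw [← h1]
    symm
    apply Finset.card_bij (i := fun k _ => α ^ k)
    · intro k hk
      simp only [Finset.mem_filter, Finset.mem_range] at hk
      simp only [Finset.mem_filter, Finset.mem_univ, true_and]
      exact (hfree k).2 hk.2
    · intro k1 h1' k2 h2' heq
      simp only [Finset.mem_filter, Finset.mem_range] at h1' h2'
      have h := pow_eq_pow_iff_modEq.1 heq
      rw [hord] at h
      rwa [Nat.ModEq, Nat.mod_eq_of_lt h1'.1, Nat.mod_eq_of_lt h2'.1] at h
    · intro ξ hξ
      simp only [Finset.mem_filter, Finset.mem_univ, true_and] at hξ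
      obtain ⟨k, hk, rfl⟩ := hξ
      refine ⟨k % n, ?_, ?_⟩
      · simp only [Finset.mem_filter, Finset.mem_range]
        refine ⟨Nat.mod_lt _ hn0, ?_⟩
        have hf : IsNFree α (α ^ (k % n)) N := by
          rw [← hord, pow_mod_orderOf]
          exact ⟨k, hk, rfl⟩
        exact (hfree _).1 hf
      · rw [← hord, pow_mod_orderOf]
  have hsum : ∑ c₀ : K, (Finset.univ.filter
      (fun ξ : Lˣ => IsNFree α ξ N ∧ Algebra.trace K L (ξ : L) = c₀)).card
      = (n / N) * N.totient := by
    rw [← htot]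
    rw [Finset.card_eq_sum_card_fiberwise
      (f := fun ξ : Lˣ => Algebra.trace K L (ξ : L)) (t := Finset.univ)
      (fun _ _ => Finset.mem_univ _)]
    apply Finset.sum_congr rfl
    intro c₀ _
    congr 1
    rw [Finset.filter_filter]
  have hsum' : ∑ c₀ : K, Zcount K L α N c₀ = (n / N) * N.totient := by
    rw [← hsum]
    exact Finset.sum_congr rfl (fun c₀ _ => hZfin c₀)
  have huni : ∀ c' : K, c' ≠ 0 → Zcount K L α N c' = Zcount K L α N c := by
    intro c' hc'
    have hμ : c' * c⁻¹ ≠ 0 := mul_ne_zero hc' (inv_ne_zero hc)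
    obtain ⟨t, ht⟩ := hKpow (c' * c⁻¹) hμ
    set u : Lˣ := α ^ ((Q : ℤ) * t) with hu
    have hvalinv : ((u⁻¹ : Lˣ) : L) = algebraMap K L (c' * c⁻¹)⁻¹ := by
      rw [map_inv₀, ← ht, Units.val_inv_eq_inv_val]
    have himg : {ξ : Lˣ | IsNFree α ξ N ∧ Algebra.trace K L (ξ : L) = c'} =
        (fun x => u * x) '' {ξ : Lˣ | IsNFree α ξ N ∧ Algebra.trace K L (ξ : L) = c} := by
      ext η
      simp only [Set.mem_image, Set.mem_setOf_eq]
      constructor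
      · rintro ⟨hfreeη, htr⟩
        refine ⟨u⁻¹ * η, ⟨?_, ?_⟩, by group⟩
        · have h := hshift (-t) η hfreeη
          rwa [show (Q : ℤ) * -t = -((Q : ℤ) * t) from by ring, zpow_neg, ← hu] at h
        · have : ((u⁻¹ * η : Lˣ) : L) = algebraMap K L (c' * c⁻¹)⁻¹ * (η : L) := by
            rw [Units.val_mul, hvalinv]
          rw [this, htr_mul, htr]
          field_simp
      · rintro ⟨ξ, ⟨hfreeξ, htr⟩, rfl⟩
        constructor
        · exact hshift t ξ hfreeξ
        · have : ((u * ξ : Lˣ) : L) = algebraMap K L (c' * c⁻¹) * (ξ : L) := by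
            rw [Units.val_mul, ht]
          rw [this, htr_mul, htr]
          field_simp
    rw [Zcount, Zcount, himg,
      Set.ncard_image_of_injective _ (mul_right_injective u)]
  have herase : ∑ c₀ ∈ Finset.univ.erase (0 : K), Zcount K L α N c₀
      = (q - 1) * Zcount K L α N c := by
    rw [Finset.sum_congr rfl (fun c₀ hc₀ => huni c₀ (Finset.ne_of_mem_erase hc₀))]
    rw [Finset.sum_const, smul_eq_mul]
    congr 1
    rw [Finset.card_erase_of_mem (Finset.mem_univ _), Finset.card_univ, hK]
  have hkey : Zcount K L α N 0 + (q - 1) * Zcount K L α N c = (n / N) * N.totient := by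
    rw [← herase, ← hsum']
    exact Finset.add_sum_erase _ _ (Finset.mem_univ 0)
  have hq1 : ((q : ℚ) - 1) = ((q - 1 : ℕ) : ℚ) := by
    rw [Nat.cast_sub (by omega : 1 ≤ q), Nat.cast_one]
  have hq1ne : ((q : ℚ) - 1) ≠ 0 := by
    rw [hq1]
    exact_mod_cast (by omega : q - 1 ≠ 0)
  rw [eq_div_iff hq1ne]
  have hcast := congrArg (fun x : ℕ => (x : ℚ)) hkey
  push_cast at hcast
  rw [hq1]
  linarith [hcast]
end

section
/- Let q be a power of a prime and m a positive integer such that every prime factor of q - 1 divides m. Then for every c ∈ F_q \ {0}, the number of primitive elements ξ ∈ F_{q^m} with Tr_{F_{q^m}/F_q}(ξ) = c is Z_{q,m,q^m-1}(c) = ( φ(q^m - 1) - Z_{q,m,q^m-1}(0) )/(q - 1); in particular this value is the same for all nonzero c ∈ F_q. -/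
open scoped BigOperators
open scoped Classical

lemma geom_nat (q m : ℕ) (hq : 1 ≤ q) :
    (q - 1) * ∑ i ∈ Finset.range m, q ^ i = q ^ m - 1 := by
  have h2 : 1 ≤ q ^ m := Nat.one_le_pow _ _ hq
  zify [hq, h2]
  rw [mul_comm]
  exact geom_sum_mul (q : ℤ) m

lemma rad_dvd_Q (q m : ℕ) (hq : 2 ≤ q) (hm : 0 < m)
    (hdiv : ∀ ℓ : ℕ, ℓ.Prime → ℓ ∣ q - 1 → ℓ ∣ m)
    (ℓ : ℕ) (hℓ : ℓ.Prime) (hℓN : ℓ ∣ q ^ m - 1) :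
    ℓ ∣ ∑ i ∈ Finset.range m, q ^ i := by
  by_cases hc : ℓ ∣ q - 1
  · have hlm : ℓ ∣ m := hdiv ℓ hℓ hc
    have h0 : ((q - 1 : ℕ) : ZMod ℓ) = 0 := (ZMod.natCast_eq_zero_iff _ _).2 hc
    rw [Nat.cast_sub (by omega : 1 ≤ q), Nat.cast_one, sub_eq_zero] at h0
    rw [← ZMod.natCast_eq_zero_iff]
    push_cast
    simp only [h0, one_pow, Finset.sum_const, Finset.card_range, nsmul_eq_mul, mul_one]
    exact (ZMod.natCast_eq_zero_iff _ _).2 hlm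
  · have : ℓ ∣ (q - 1) * ∑ i ∈ Finset.range m, q ^ i := by
      rw [geom_nat q m (by omega)]; exact hℓN
    rcases (Nat.Prime.dvd_mul hℓ).1 this with h | h
    · exact absurd h hc
    · exact h

lemma coprime_shift (q m k t : ℕ) (hq : 2 ≤ q) (hm : 0 < m)
    (hdiv : ∀ ℓ : ℕ, ℓ.Prime → ℓ ∣ q - 1 → ℓ ∣ m)
    (hk : Nat.Coprime k (q ^ m - 1)) :
    Nat.Coprime (k + (∑ i ∈ Finset.range m, q ^ i) * t) (q ^ m - 1) := by
  by_contra hcon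
  obtain ⟨ℓ, hℓp, hℓ1, hℓ2⟩ := Nat.Prime.not_coprime_iff_dvd.1 hcon
  have hℓp' : ℓ.Prime := hℓp
  have hQ : ℓ ∣ (∑ i ∈ Finset.range m, q ^ i) := rad_dvd_Q q m hq hm hdiv ℓ hℓp' hℓ2
  have hk' : ℓ ∣ k := (Nat.dvd_add_right (hQ.mul_right t)).1 (by rwa [add_comm] at hℓ1)
  have : ℓ ∣ 1 := hk ▸ Nat.dvd_gcd hk' hℓ2
  exact hℓp'.one_lt.ne' (Nat.dvd_one.1 this)

lemma zc_le (q m : ℕ) (hq2 : 2 ≤ q) (hm : 0 < m)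
    (hdiv : ∀ ℓ : ℕ, ℓ.Prime → ℓ ∣ q - 1 → ℓ ∣ m)
    (K L : Type) [Field K] [Fintype K] [Field L] [Fintype L] [Algebra K L]
    (hK : Fintype.card K = q) (hL : Fintype.card L = q ^ m)
    (α : Lˣ) (hα : ∀ x : Lˣ, x ∈ Subgroup.zpowers α)
    (a c : K) (ha : a ≠ 0) :
    Zcount K L α (q ^ m - 1) c ≤ Zcount K L α (q ^ m - 1) (a * c) := by
  set N := q ^ m - 1 with hN
  set Q := ∑ i ∈ Finset.range m, q ^ i with hQdef
  have hqm : 1 < q ^ m := Nat.one_lt_pow hm.ne' (by omega)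
  have hcard : Fintype.card Lˣ = N := by rw [Fintype.card_units, hL]
  have horder : orderOf α = N := by
    rw [orderOf_eq_card_of_forall_mem_zpowers hα, Nat.card_eq_fintype_card, hcard]
  set w : Kˣ := Units.mk0 a ha with hw
  set u : Lˣ := Units.map (algebraMap K L).toMonoidHom w with hu
  have huL : (u : L) = algebraMap K L a := rfl
  have hu1 : u ^ (q - 1) = 1 := by
    have hcK : Fintype.card Kˣ = q - 1 := by rw [Fintype.card_units, hK]
    have : w ^ (q - 1) = 1 := by rw [← hcK]; exact pow_card_eq_one
    rw [hu, ← map_pow, this, map_one]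
  obtain ⟨j, hj'⟩ := mem_powers_iff_mem_zpowers.mpr (hα u)
  have hj : α ^ j = u := hj'
  clear hj'
  have hNd : N ∣ j * (q - 1) := by
    rw [← horder]
    exact orderOf_dvd_of_pow_eq_one (by rw [pow_mul, hj, hu1])
  have hQj : Q ∣ j := by
    have hNQ : N = Q * (q - 1) := by rw [mul_comm]; exact (geom_nat q m (by omega)).symm
    rw [hNQ] at hNd
    exact (Nat.mul_dvd_mul_iff_right (by omega : 0 < q - 1)).1 hNd
  obtain ⟨t, rfl⟩ := hQj
  unfold Zcount
  have himg : (fun ξ : Lˣ => u * ξ) ''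
      {ξ : Lˣ | IsNFree α ξ N ∧ Algebra.trace K L (ξ : L) = c} ⊆
      {ξ : Lˣ | IsNFree α ξ N ∧ Algebra.trace K L (ξ : L) = a * c} := by
    rintro - ⟨ξ, ⟨⟨k, hk, rfl⟩, htr⟩, rfl⟩
    constructor
    · refine ⟨k + Q * t, coprime_shift q m k t hq2 hm hdiv hk, ?_⟩
      show u * α ^ k = α ^ (k + Q * t)
      rw [← hj, ← pow_add, Nat.add_comm]
    · show (Algebra.trace K L) ((u * α ^ k : Lˣ) : L) = a * c
      have : ((u * α ^ k : Lˣ) : L) = algebraMap K L a * ((α : Lˣ) ^ k : Lˣ) := by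
        rw [Units.val_mul, huL]
      rw [this, ← Algebra.smul_def, map_smul, smul_eq_mul, htr]
  calc {ξ : Lˣ | IsNFree α ξ N ∧ Algebra.trace K L (ξ : L) = c}.ncard
      = ((fun ξ : Lˣ => u * ξ) ''
          {ξ : Lˣ | IsNFree α ξ N ∧ Algebra.trace K L (ξ : L) = c}).ncard :=
        (Set.ncard_image_of_injective _ (mul_right_injective u)).symm
    _ ≤ _ := Set.ncard_le_ncard himg (Set.toFinite _)

lemma total_count (q m : ℕ) (hq2 : 2 ≤ q) (hm : 0 < m)
    (K L : Type) [Field K] [Fintype K] [Field L] [Fintype L] [Algebra K L]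
    (hL : Fintype.card L = q ^ m)
    (α : Lˣ) (hα : ∀ x : Lˣ, x ∈ Subgroup.zpowers α) :
    ∑ c : K, Zcount K L α (q ^ m - 1) c = (q ^ m - 1).totient := by
  set N := q ^ m - 1 with hN
  have hqm : 1 < q ^ m := Nat.one_lt_pow hm.ne' (by omega)
  have hcard : Fintype.card Lˣ = N := by rw [Fintype.card_units, hL]
  have horder : orderOf α = N := by
    rw [orderOf_eq_card_of_forall_mem_zpowers hα, Nat.card_eq_fintype_card, hcard]
  have hNpos : 0 < N := by omega
  -- IsNFree ↔ orderOf = N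
  have hiff : ∀ ξ : Lˣ, IsNFree α ξ N ↔ orderOf ξ = N := by
    intro ξ
    constructor
    · rintro ⟨k, hk, rfl⟩
      rw [orderOf_pow, horder, Nat.Coprime.gcd_eq_one (Nat.Coprime.symm hk), Nat.div_one]
    · intro hξ
      obtain ⟨k, hk⟩ := mem_powers_iff_mem_zpowers.mpr (hα ξ)
      have hk' : α ^ k = ξ := hk
      have : N / Nat.gcd N k = N := by
        rw [← horder, ← orderOf_pow, hk', hξ, horder]
      have hg : Nat.gcd N k = 1 := by
        rcases (Nat.div_eq_self).1 this with h | h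
        · omega
        · exact h
      exact ⟨k, Nat.Coprime.symm hg, hk'.symm⟩
  -- Zcount as finset card
  have hz : ∀ c : K, Zcount K L α N c =
      (Finset.univ.filter fun ξ : Lˣ =>
        IsNFree α ξ N ∧ Algebra.trace K L (ξ : L) = c).card := by
    intro c
    rw [Zcount, Set.ncard_eq_toFinset_card', Set.toFinset_setOf]
  have hsum : ∑ c : K, Zcount K L α N c =
      (Finset.univ.filter fun ξ : Lˣ => IsNFree α ξ N).card := by
    rw [Finset.card_eq_sum_card_fiberwise
      (f := fun ξ : Lˣ => Algebra.trace K L (ξ : L)) (t := Finset.univ)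
      (fun x _ => Finset.mem_univ _)]
    refine Finset.sum_congr rfl fun c _ => ?_
    rw [hz c, Finset.filter_filter]
  rw [hsum]
  have : (Finset.univ.filter fun ξ : Lˣ => IsNFree α ξ N) =
      (Finset.univ.filter fun ξ : Lˣ => orderOf ξ = N) := by
    refine Finset.filter_congr fun ξ _ => ?_
    simp [hiff ξ]
  rw [this]
  have hcyc : IsCyclic Lˣ := inferInstance
  exact IsCyclic.card_orderOf_eq_totient (hcard ▸ dvd_refl N)

/-- uniformity for primitive elements when every prime factor of
`q - 1` divides `m`. -/
theorem stmt_9 (p s m q : ℕ) [Fact p.Prime] (hs : 0 < s) (hm : 0 < m)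
    (hq : q = p ^ s)
    (K L : Type) [Field K] [Fintype K] [Field L] [Fintype L] [Algebra K L]
    (hK : Fintype.card K = q) (hL : Fintype.card L = q ^ m)
    (α : Lˣ) (hα : ∀ x : Lˣ, x ∈ Subgroup.zpowers α)
    (hdiv : ∀ ℓ : ℕ, ℓ.Prime → ℓ ∣ q - 1 → ℓ ∣ m) :
    ∀ c : K, c ≠ 0 →
      (Zcount K L α (q ^ m - 1) c : ℚ) =
        ((Nat.totient (q ^ m - 1) : ℚ) - (Zcount K L α (q ^ m - 1) (0 : K) : ℚ)) /
          ((q : ℚ) - 1) := by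
  intro c hc
  have hp2 : 2 ≤ p := (Fact.out : p.Prime).two_le
  have hq2 : 2 ≤ q := by
    rw [hq]
    calc 2 ≤ p := hp2
      _ = p ^ 1 := (pow_one p).symm
      _ ≤ p ^ s := Nat.pow_le_pow_right (by omega) hs
  set N := q ^ m - 1 with hN
  have huni : ∀ c' : K, c' ≠ 0 → Zcount K L α N c' = Zcount K L α N c := by
    intro c' hc'
    have h1 := zc_le q m hq2 hm hdiv K L hK hL α hα (c' * c⁻¹) c
      (mul_ne_zero hc' (inv_ne_zero hc))
    have h2 := zc_le q m hq2 hm hdiv K L hK hL α hα (c * c'⁻¹) c'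
      (mul_ne_zero hc (inv_ne_zero hc'))
    rw [show c' * c⁻¹ * c = c' by field_simp] at h1
    rw [show c * c'⁻¹ * c' = c by field_simp] at h2
    rw [← hN] at h1 h2
    omega
  have hkey : N.totient = Zcount K L α N 0 + (q - 1) * Zcount K L α N c := by
    have htot := total_count q m hq2 hm K L hL α hα
    rw [← htot, ← Finset.add_sum_erase Finset.univ _ (Finset.mem_univ (0 : K))]
    congr 1
    rw [Finset.sum_congr rfl (fun x hx => huni x (Finset.mem_erase.1 hx).1), Finset.sum_const, smul_eq_mul,
      Finset.card_erase_of_mem (Finset.mem_univ _), Finset.card_univ, hK]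
  have hcast := congrArg (Nat.cast : ℕ → ℚ) hkey
  push_cast [Nat.cast_sub (by omega : 1 ≤ q)] at hcast
  have hqne : (q : ℚ) - 1 ≠ 0 := by
    have : (2 : ℚ) ≤ (q : ℚ) := by exact_mod_cast hq2
    linarith
  rw [eq_div_iff hqne]
  linear_combination -hcast
end

section
/- Let q be a power of a prime, m a positive integer, and N | q^m - 1 such that every prime divisor of N divides Q = (q^m - 1)/(q - 1). Then for every subfield F_t of F_q and every nonzero c_t ∈ F_t^*, one has Δ_0(N) = Z_{t, m·[F_q:F_t], N}(0) - Z_{t, m·[F_q:F_t], N}(c_t). Furthermore, if t ≠ q, then Δ_0(N) = ( q·Z_{q,m,N}(0) - t·Z_{t, m·[F_q:F_t], N}(0) )/(q - t). -/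
open scoped BigOperators
open scoped Classical

lemma exp_val (p : ℕ) [Fact p.Prime] (x : ZMod p) (a : ℕ) (ha : (a : ZMod p) = x) :
    Complex.exp (2 * Real.pi * Complex.I * (x.val : ℂ) / p) =
    Complex.exp (2 * Real.pi * Complex.I * (a : ℂ) / p) := by
  have hp : (p : ℂ) ≠ 0 := by exact_mod_cast (Fact.out : p.Prime).ne_zero
  have h1 : a % p = x.val := by rw [← ha, ZMod.val_natCast]
  have h2 : (a : ℂ) = (x.val : ℂ) + p * (a / p : ℕ) := by
    conv_lhs => rw [← Nat.mod_add_div a p]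
    push_cast [h1]
    ring
  rw [h2]
  rw [show 2 * Real.pi * Complex.I * ((x.val : ℂ) + p * (a / p : ℕ)) / p
      = 2 * Real.pi * Complex.I * (x.val : ℂ) / p + (a / p : ℕ) * (2 * Real.pi * Complex.I) by
    field_simp]
  rw [Complex.exp_add, Complex.exp_nat_mul_two_pi_mul_I, mul_one]

lemma canChar_add (p : ℕ) [Fact p.Prime] (F : Type) [Field F] [Fintype F] [CharP F p]
    (a b : F) : canChar p F (a + b) = canChar p F a * canChar p F b := by
  letI := ZMod.algebra F p
  unfold canChar
  rw [map_add]
  set x := Algebra.trace (ZMod p) F a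
  set y := Algebra.trace (ZMod p) F b
  rw [exp_val p (x+y) (x.val + y.val) (by push_cast [ZMod.natCast_val, ZMod.cast_id]; ring),
      ← Complex.exp_add]
  congr 1
  push_cast
  ring

lemma canChar_zero (p : ℕ) [Fact p.Prime] (F : Type) [Field F] [Fintype F] [CharP F p] :
    canChar p F 0 = 1 := by
  unfold canChar
  simp

lemma canChar_ne_one (p : ℕ) [Fact p.Prime] (F : Type) [Field F] [Fintype F] [CharP F p] :
    ∃ z : F, canChar p F z ≠ 1 := by
  letI := ZMod.algebra F p
  obtain ⟨z, hz⟩ := Algebra.trace_surjective (ZMod p) F 1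
  refine ⟨z, ?_⟩
  unfold canChar
  rw [hz]
  have hp1 : 1 < p := (Fact.out : p.Prime).one_lt
  have : (ZMod.val (1 : ZMod p) : ℂ) = 1 := by
    rw [ZMod.val_one]; norm_num
  rw [this, mul_one]
  intro h
  rw [Complex.exp_eq_one_iff] at h
  obtain ⟨n, hn⟩ := h
  have hp : (p : ℂ) ≠ 0 := Nat.cast_ne_zero.mpr (Fact.out : p.Prime).ne_zero
  have h2 : (2 * Real.pi * Complex.I : ℂ) ≠ 0 := by
    simp [Real.pi_ne_zero, Complex.I_ne_zero]
  field_simp at hn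
  have h4 : (2 * Real.pi * Complex.I : ℂ) * 1 = (2 * Real.pi * Complex.I) * (n * p) := by
    linear_combination (2 * Real.pi * Complex.I) * hn
  have h5 : (1 : ℂ) = ((n * p : ℤ) : ℂ) := by
    have := mul_left_cancel₀ h2 h4
    push_cast
    exact this
  have h3 : (1 : ℤ) = n * p := by exact_mod_cast h5
  have hd : (p : ℤ) ∣ 1 := Dvd.intro n (by linarith)
  have := Int.le_of_dvd one_pos hd
  omega

lemma sum_canChar (p : ℕ) [Fact p.Prime] (F : Type) [Field F] [Fintype F] [CharP F p] :
    ∑ z : F, canChar p F z = 0 := by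
  obtain ⟨z0, hz0⟩ := canChar_ne_one p F
  have h : canChar p F z0 * ∑ z : F, canChar p F z = ∑ z : F, canChar p F z := by
    rw [Finset.mul_sum]
    rw [← Fintype.sum_equiv (Equiv.addLeft z0) _ (fun z => canChar p F z)]
    intro z
    simp [← canChar_add, Equiv.addLeft]
  have h2 : (canChar p F z0 - 1) * ∑ z : F, canChar p F z = 0 := by linear_combination h
  rcases mul_eq_zero.mp h2 with h1 | h1
  · exact absurd (by linear_combination h1) hz0
  · exact h1

lemma canChar_trace (p : ℕ) [Fact p.Prime] (T L : Type) [Field T] [Fintype T] [Field L]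
    [Fintype L] [Algebra T L] [CharP L p] [CharP T p] (ξ : L) :
    canChar p L ξ = canChar p T (Algebra.trace T L ξ) := by
  letI := ZMod.algebra L p
  letI := ZMod.algebra T p
  haveI : IsScalarTower (ZMod p) T L := IsScalarTower.of_algebraMap_eq' (by
    apply RingHom.ext_zmod)
  unfold canChar
  rw [Algebra.trace_trace (S := T)]

lemma moebius_gcd (N k : ℕ) (hN : N ≠ 0) :
    ∑ d ∈ N.divisors, ((ArithmeticFunction.moebius d : ℤ) : ℂ) * (if d ∣ k then 1 else 0)
      = if Nat.gcd N k = 1 then 1 else 0 := by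
  have hg : Nat.gcd N k ≠ 0 := fun h => hN (Nat.eq_zero_of_gcd_eq_zero_left h)
  have step1 : ∑ d ∈ N.divisors, ((ArithmeticFunction.moebius d : ℤ) : ℂ) *
      (if d ∣ k then 1 else 0)
      = ∑ d ∈ (Nat.gcd N k).divisors, ((ArithmeticFunction.moebius d : ℤ) : ℂ) := by
    rw [← Finset.sum_filter_add_sum_filter_not N.divisors (· ∣ k)]
    have h2 : ∀ d ∈ N.divisors.filter (¬ · ∣ k),
        ((ArithmeticFunction.moebius d : ℤ) : ℂ) * (if d ∣ k then 1 else 0) = 0 := by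
      intro d hd
      simp only [Finset.mem_filter] at hd
      simp [hd.2]
    rw [Finset.sum_eq_zero h2, add_zero]
    have hset : N.divisors.filter (· ∣ k) = (Nat.gcd N k).divisors := by
      ext d
      simp only [Finset.mem_filter, Nat.mem_divisors]
      constructor
      · rintro ⟨⟨h1, _⟩, h3⟩
        exact ⟨Nat.dvd_gcd h1 h3, hg⟩
      · rintro ⟨h1, _⟩
        exact ⟨⟨h1.trans (Nat.gcd_dvd_left N k), hN⟩, h1.trans (Nat.gcd_dvd_right N k)⟩
    rw [hset]
    apply Finset.sum_congr rfl
    intro d hd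
    have : d ∣ k := (Nat.mem_divisors.mp hd).1.trans (Nat.gcd_dvd_right N k)
    simp [this]
  rw [step1]
  have key : ∑ d ∈ (Nat.gcd N k).divisors, (ArithmeticFunction.moebius d : ℤ)
      = if Nat.gcd N k = 1 then 1 else 0 := by
    rw [← ArithmeticFunction.coe_mul_zeta_apply, ArithmeticFunction.moebius_mul_coe_zeta,
      ArithmeticFunction.one_apply]
  calc ∑ d ∈ (Nat.gcd N k).divisors, ((ArithmeticFunction.moebius d : ℤ) : ℂ)
      = ((∑ d ∈ (Nat.gcd N k).divisors, (ArithmeticFunction.moebius d : ℤ) : ℤ) : ℂ) := by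
        push_cast; rfl
    _ = _ := by rw [key]; split <;> norm_num

lemma isNFree_pow_iff {L : Type} [Field L] [Fintype L] (α : Lˣ) (N k : ℕ)
    (hN : N ∣ orderOf α) : (IsNFree α (α ^ k) N ↔ Nat.gcd N k = 1) := by
  constructor
  · rintro ⟨k', hk', heq⟩
    have hmod : k % orderOf α = k' % orderOf α := pow_inj_mod.mp heq
    have hmodN : k % N = k' % N := by
      rw [← Nat.mod_mod_of_dvd k hN, hmod, Nat.mod_mod_of_dvd k' hN]
    have : Nat.gcd N k = Nat.gcd N k' := by
      rw [Nat.gcd_rec N k, hmodN, ← Nat.gcd_rec N k']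
    rw [this, Nat.gcd_comm]
    exact hk'
  · intro h
    exact ⟨k, Nat.coprime_comm.mp h, rfl⟩

lemma mem_class_iff {L : Type} [Field L] [Fintype L] (α : Lˣ) (d k : ℕ)
    (hd : d ∣ orderOf α) :
    (∃ i : ℕ, α ^ k = α ^ (0:ℤ) * (α ^ d) ^ i) ↔ d ∣ k := by
  simp only [zpow_zero, one_mul, ← pow_mul]
  constructor
  · rintro ⟨i, hi⟩
    have hmod : k ≡ d * i [MOD orderOf α] := pow_eq_pow_iff_modEq.mp hi
    have h1 : (orderOf α : ℤ) ∣ (d * i : ℤ) - (k : ℤ) := by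
      have := (Nat.modEq_iff_dvd (n := orderOf α) (a := k) (b := d * i)).mp hmod
      exact_mod_cast this
    have h2 : (d : ℤ) ∣ (d * i : ℤ) - (k : ℤ) := dvd_trans (Int.natCast_dvd_natCast.mpr hd) h1
    have h3 : (d : ℤ) ∣ ((d * i : ℤ) - ((d * i : ℤ) - k)) := dvd_sub (Dvd.intro i rfl) h2
    rw [sub_sub_cancel] at h3
    exact_mod_cast h3
  · rintro ⟨c, rfl⟩
    exact ⟨c, rfl⟩

lemma deltaSum_eq (p : ℕ) [Fact p.Prime] (L : Type) [Field L] [Fintype L] [CharP L p]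
    (α : Lˣ) (hα : ∀ x : Lˣ, x ∈ Subgroup.zpowers α) (N : ℕ)
    (hN : N ∣ orderOf α) (hN0 : N ≠ 0) :
    DeltaSum p L α N 0 = ∑ ξ : Lˣ, if IsNFree α ξ N then canChar p L (ξ : L) else 0 := by
  have hlog : ∀ x : Lˣ, ∃ k : ℕ, x = α ^ k := by
    intro x
    obtain ⟨k, hk⟩ := Submonoid.mem_powers_iff x α |>.mp
      (mem_powers_iff_mem_zpowers.mpr (hα x))
    exact ⟨k, hk.symm⟩
  unfold DeltaSum gaussPeriod
  have step : ∀ d : ℕ, (∑ x ∈ Finset.univ.filter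
        (fun x : Lˣ => ∃ i : ℕ, x = α ^ (0:ℤ) * (α ^ d) ^ i), canChar p L (x : L))
      = ∑ x : Lˣ, (if (∃ i : ℕ, x = α ^ (0:ℤ) * (α ^ d) ^ i) then canChar p L (x : L) else 0) :=
    fun d => (Finset.sum_filter _ _)
  simp only [step, Finset.mul_sum]
  rw [Finset.sum_comm]
  apply Finset.sum_congr rfl
  intro x _
  obtain ⟨k, rfl⟩ := hlog x
  have hcond : ∀ d ∈ N.divisors, ((ArithmeticFunction.moebius d : ℤ) : ℂ) *
      (if (∃ i : ℕ, α ^ k = α ^ (0:ℤ) * (α ^ d) ^ i) then canChar p L ((α ^ k : Lˣ) : L) else 0)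
      = ((ArithmeticFunction.moebius d : ℤ) : ℂ) * (if d ∣ k then 1 else 0)
        * canChar p L ((α ^ k : Lˣ) : L) := by
    intro d hd
    have hdo : d ∣ orderOf α := (Nat.mem_divisors.mp hd).1.trans hN
    rw [mem_class_iff α d k hdo]
    split <;> ring
  rw [Finset.sum_congr rfl hcond, ← Finset.sum_mul, moebius_gcd N k hN0]
  simp only [isNFree_pow_iff α N k hN]
  split <;> ring

lemma exists_log (L : Type) [Field L] [Fintype L] (α : Lˣ)
    (hα : ∀ x : Lˣ, x ∈ Subgroup.zpowers α) (Q e : ℕ)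
    (hn : orderOf α = Q * e) (he : 0 < e) (u : Lˣ) (t1 : ℕ) (hu : u ^ t1 = 1)
    (hdvd : t1 ∣ e) : ∃ j : ℕ, u = α ^ j ∧ Q ∣ j := by
  obtain ⟨j, hj⟩ := Submonoid.mem_powers_iff u α |>.mp (mem_powers_iff_mem_zpowers.mpr (hα u))
  refine ⟨j, hj.symm, ?_⟩
  have h1 : α ^ (j * t1) = 1 := by rw [pow_mul, hj, hu]
  have h2 : orderOf α ∣ j * t1 := orderOf_dvd_of_pow_eq_one h1
  have h3 : Q * e ∣ j * e := by
    calc Q * e ∣ j * t1 := hn ▸ h2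
    _ ∣ j * e := mul_dvd_mul_left j hdvd
  rw [mul_comm Q e, mul_comm j e] at h3
  exact (mul_dvd_mul_iff_left he.ne').mp h3

lemma nfree_mul (L : Type) [Field L] [Fintype L] (α : Lˣ) (N : ℕ) (_hN : N ∣ orderOf α)
    (u : Lˣ) (j : ℕ) (hj : u = α ^ j) (hjd : ∀ ℓ : ℕ, ℓ.Prime → ℓ ∣ N → ℓ ∣ j)
    (ξ : Lˣ) (hξ : IsNFree α ξ N) : IsNFree α (u * ξ) N := by
  obtain ⟨k, hk, rfl⟩ := hξ
  refine ⟨j + k, ?_, by rw [hj, ← pow_add]⟩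
  by_contra hcop
  obtain ⟨ℓ, hℓp, hℓ1, hℓ2⟩ := Nat.Prime.not_coprime_iff_dvd.mp hcop
  have hℓj : ℓ ∣ j := hjd ℓ hℓp hℓ2
  have hℓk : ℓ ∣ k := (Nat.dvd_add_right hℓj).mp hℓ1
  exact hℓp.one_lt.ne' (Nat.eq_one_of_dvd_coprimes hk hℓk hℓ2)

lemma Zcount_eq_card (F L : Type) [Field F] [Field L] [Fintype L] [Algebra F L]
    (α : Lˣ) (N : ℕ) (c : F) :
    Zcount F L α N c = (Finset.univ.filter
      (fun ξ : Lˣ => IsNFree α ξ N ∧ Algebra.trace F L (ξ : L) = c)).card := by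
  classical
  rw [Zcount, Set.ncard_eq_toFinset_card']
  congr 1
  ext ξ
  simp

lemma Zcount_const (F L : Type) [Field F] [Fintype F] [Field L] [Fintype L] [Algebra F L]
    (α : Lˣ) (hα : ∀ x : Lˣ, x ∈ Subgroup.zpowers α) (N Q : ℕ)
    (hn : ∃ e : ℕ, 0 < e ∧ orderOf α = Q * e ∧ (Fintype.card F - 1) ∣ e)
    (hrad : ∀ ℓ : ℕ, ℓ.Prime → ℓ ∣ N → ℓ ∣ Q)
    (hNd : N ∣ orderOf α)
    (c c' : F) (hc : c ≠ 0) (hc' : c' ≠ 0) :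
    Zcount F L α N c = Zcount F L α N c' := by
  obtain ⟨e, he, hn, hdvd⟩ := hn
  set lam : F := c' / c with hlam
  have hlam0 : lam ≠ 0 := div_ne_zero hc' hc
  have hinj : Function.Injective (algebraMap F L) := (algebraMap F L).injective
  have hL0 : algebraMap F L lam ≠ 0 := fun h => hlam0 (hinj (by simpa using h))
  set u : Lˣ := Units.mk0 _ hL0 with hu
  have hupow : u ^ (Fintype.card F - 1) = 1 := by
    ext
    rw [Units.val_pow_eq_pow_val, Units.val_one, hu, Units.val_mk0, ← map_pow,
      FiniteField.pow_card_sub_one_eq_one lam hlam0, map_one]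
  have huinvpow : u⁻¹ ^ (Fintype.card F - 1) = 1 := by
    rw [inv_pow, hupow, inv_one]
  obtain ⟨j, hj, hQj⟩ := exists_log L α hα Q e hn he u _ hupow hdvd
  obtain ⟨j', hj', hQj'⟩ := exists_log L α hα Q e hn he u⁻¹ _ huinvpow hdvd
  have hjd : ∀ ℓ : ℕ, ℓ.Prime → ℓ ∣ N → ℓ ∣ j := fun ℓ hp hd => (hrad ℓ hp hd).trans hQj
  have hjd' : ∀ ℓ : ℕ, ℓ.Prime → ℓ ∣ N → ℓ ∣ j' := fun ℓ hp hd => (hrad ℓ hp hd).trans hQj'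
  -- the multiplication map gives image equality
  have htr : ∀ ξ : Lˣ, Algebra.trace F L ((u * ξ : Lˣ) : L)
      = lam * Algebra.trace F L (ξ : L) := by
    intro ξ
    have : ((u * ξ : Lˣ) : L) = lam • (ξ : L) := by
      push_cast [hu, Algebra.smul_def, Units.val_mk0]
      rfl
    rw [this, map_smul, smul_eq_mul]
  have himg : (fun ξ : Lˣ => u * ξ) ''
      {ξ : Lˣ | IsNFree α ξ N ∧ Algebra.trace F L (ξ : L) = c}
      = {ξ : Lˣ | IsNFree α ξ N ∧ Algebra.trace F L (ξ : L) = c'} := by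
    ext y
    simp only [Set.mem_image, Set.mem_setOf_eq]
    constructor
    · rintro ⟨ξ, ⟨hfree, htrc⟩, rfl⟩
      refine ⟨nfree_mul L α N hNd u j hj hjd ξ hfree, ?_⟩
      rw [htr, htrc, hlam, div_mul_cancel₀ c' hc]
    · rintro ⟨hfree, htrc⟩
      refine ⟨u⁻¹ * y, ⟨nfree_mul L α N hNd u⁻¹ j' hj' hjd' y hfree, ?_⟩, by group⟩
      have := htr (u⁻¹ * y)
      rw [show u * (u⁻¹ * y) = y by group] at this
      have htr' : Algebra.trace F L ((u⁻¹ * y : Lˣ) : L) = lam⁻¹ * c' := by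
        rw [htrc] at this
        rw [this, inv_mul_cancel_left₀ hlam0]
      rw [htr', hlam]
      field_simp
  calc Zcount F L α N c
      = ((fun ξ : Lˣ => u * ξ) ''
          {ξ : Lˣ | IsNFree α ξ N ∧ Algebra.trace F L (ξ : L) = c}).ncard := by
        rw [Set.ncard_image_of_injective _ (mul_right_injective u)]
        rfl
    _ = Zcount F L α N c' := by rw [himg]; rfl

lemma delta_as_sum (p : ℕ) [Fact p.Prime] (F L : Type) [Field F] [Fintype F] [CharP F p]
    [Field L] [Fintype L] [CharP L p] [Algebra F L]
    (α : Lˣ) (hα : ∀ x : Lˣ, x ∈ Subgroup.zpowers α) (N : ℕ)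
    (hN : N ∣ orderOf α) (hN0 : N ≠ 0) :
    DeltaSum p L α N 0 = ∑ c : F, (Zcount F L α N c : ℂ) * canChar p F c := by
  classical
  rw [deltaSum_eq p L α hα N hN hN0]
  have h1 : ∀ ξ : Lˣ, (if IsNFree α ξ N then canChar p L (ξ : L) else 0)
      = (if IsNFree α ξ N then canChar p F (Algebra.trace F L (ξ : L)) else 0) := by
    intro ξ
    rw [canChar_trace p F L]
  simp only [h1]
  rw [← Finset.sum_fiberwise_of_maps_to
    (g := fun ξ : Lˣ => Algebra.trace F L (ξ : L)) (fun x _ => Finset.mem_univ _)]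
  apply Finset.sum_congr rfl
  intro c _
  have h2 : ∀ ξ ∈ Finset.univ.filter (fun ξ : Lˣ => Algebra.trace F L (ξ : L) = c),
      (if IsNFree α ξ N then canChar p F (Algebra.trace F L (ξ : L)) else 0)
      = (if IsNFree α ξ N then canChar p F c else 0) := by
    intro ξ hξ
    rw [(Finset.mem_filter.mp hξ).2]
  rw [Finset.sum_congr rfl h2, ← Finset.sum_filter, Finset.sum_const, Finset.filter_filter,
    Zcount_eq_card]
  have h3 : (Finset.univ.filter fun ξ : Lˣ =>
        IsNFree α ξ N ∧ Algebra.trace F L (ξ : L) = c)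
      = (Finset.univ.filter fun ξ : Lˣ =>
        Algebra.trace F L (ξ : L) = c ∧ IsNFree α ξ N) := by
    apply Finset.filter_congr
    intro ξ _
    exact and_comm
  rw [h3, nsmul_eq_mul]

lemma sum_Zcount (F L : Type) [Field F] [Fintype F] [Field L] [Fintype L] [Algebra F L]
    (α : Lˣ) (N : ℕ) :
    ∑ c : F, Zcount F L α N c
      = (Finset.univ.filter (fun ξ : Lˣ => IsNFree α ξ N)).card := by
  classical
  rw [Finset.card_eq_sum_card_fiberwise
    (f := fun ξ : Lˣ => Algebra.trace F L (ξ : L)) (t := Finset.univ)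
    (fun x _ => Finset.mem_univ _)]
  apply Finset.sum_congr rfl
  intro c _
  rw [Zcount_eq_card, Finset.filter_filter]

lemma delta_formula (p : ℕ) [Fact p.Prime] (F L : Type) [Field F] [Fintype F] [CharP F p]
    [Field L] [Fintype L] [CharP L p] [Algebra F L]
    (α : Lˣ) (hα : ∀ x : Lˣ, x ∈ Subgroup.zpowers α) (N Q : ℕ)
    (hN : N ∣ orderOf α) (hN0 : N ≠ 0)
    (hn : ∃ e : ℕ, 0 < e ∧ orderOf α = Q * e ∧ (Fintype.card F - 1) ∣ e)
    (hrad : ∀ ℓ : ℕ, ℓ.Prime → ℓ ∣ N → ℓ ∣ Q)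
    (c0 : F) (hc0 : c0 ≠ 0) :
    DeltaSum p L α N 0 = (Zcount F L α N 0 : ℂ) - (Zcount F L α N c0 : ℂ) := by
  classical
  rw [delta_as_sum p F L α hα N hN hN0]
  rw [← Finset.add_sum_erase Finset.univ _ (Finset.mem_univ (0 : F))]
  have hψ0 : canChar p F 0 = 1 := canChar_zero p F
  have hcon : ∀ c ∈ Finset.univ.erase (0 : F),
      (Zcount F L α N c : ℂ) * canChar p F c
        = (Zcount F L α N c0 : ℂ) * canChar p F c := by
    intro c hc
    rw [Zcount_const F L α hα N Q hn hrad hN c c0 (Finset.ne_of_mem_erase hc) hc0]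
  rw [Finset.sum_congr rfl hcon, ← Finset.mul_sum]
  have hsum : ∑ c ∈ Finset.univ.erase (0 : F), canChar p F c = -1 := by
    have h := sum_canChar p F
    rw [← Finset.add_sum_erase Finset.univ _ (Finset.mem_univ (0 : F)), hψ0] at h
    linear_combination h
  rw [hsum, hψ0, mul_one]
  ring

lemma sum_Zcount_split (F L : Type) [Field F] [Fintype F] [Field L] [Fintype L] [Algebra F L]
    (α : Lˣ) (hα : ∀ x : Lˣ, x ∈ Subgroup.zpowers α) (N Q : ℕ)
    (hN : N ∣ orderOf α)
    (hn : ∃ e : ℕ, 0 < e ∧ orderOf α = Q * e ∧ (Fintype.card F - 1) ∣ e)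
    (hrad : ∀ ℓ : ℕ, ℓ.Prime → ℓ ∣ N → ℓ ∣ Q)
    (c0 : F) (hc0 : c0 ≠ 0) :
    ∑ c : F, Zcount F L α N c
      = Zcount F L α N 0 + (Fintype.card F - 1) * Zcount F L α N c0 := by
  classical
  rw [← Finset.add_sum_erase Finset.univ _ (Finset.mem_univ (0 : F))]
  congr 1
  have hcon : ∀ c ∈ Finset.univ.erase (0 : F),
      Zcount F L α N c = Zcount F L α N c0 := by
    intro c hc
    exact Zcount_const F L α hα N Q hn hrad hN c c0 (Finset.ne_of_mem_erase hc) hc0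
  rw [Finset.sum_congr rfl hcon, Finset.sum_const,
    Finset.card_erase_of_mem (Finset.mem_univ _), Finset.card_univ, smul_eq_mul]

/-- `Δ₀(N)` as a difference of counts over a subfield `F_t` of `F_q`. -/
theorem stmt_10 (p s m q t Q N : ℕ) [Fact p.Prime] (hs : 0 < s) (hm : 0 < m)
    (hq : q = p ^ s) (hQ : Q = (q ^ m - 1) / (q - 1))
    (T K L : Type) [Field T] [Fintype T] [Field K] [Fintype K] [Field L] [Fintype L]
    [Algebra T K] [Algebra K L] [Algebra T L] [IsScalarTower T K L] [CharP L p]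
    (hT : Fintype.card T = t) (hK : Fintype.card K = q) (hL : Fintype.card L = q ^ m)
    (α : Lˣ) (hα : ∀ x : Lˣ, x ∈ Subgroup.zpowers α)
    (hN : N ∣ q ^ m - 1)
    (hrad : ∀ ℓ : ℕ, ℓ.Prime → ℓ ∣ N → ℓ ∣ Q) :
    (∀ ct : T, ct ≠ 0 →
      DeltaSum p L α N 0 =
        (Zcount T L α N (0 : T) : ℂ) - (Zcount T L α N ct : ℂ)) ∧
    (t ≠ q →
      DeltaSum p L α N 0 =
        ((q : ℂ) * (Zcount K L α N (0 : K) : ℂ) -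
          (t : ℂ) * (Zcount T L α N (0 : T) : ℂ)) / ((q : ℂ) - (t : ℂ))) := by
  haveI : CharP T p := (Algebra.charP_iff T L p).mpr inferInstance
  haveI : CharP K p := (Algebra.charP_iff K L p).mpr inferInstance
  have hq2 : 2 ≤ q := by
    have := Nat.one_lt_pow hs.ne' (Fact.out : p.Prime).one_lt
    omega
  have hqm1 : 1 < q ^ m := Nat.one_lt_pow hm.ne' (by omega)
  have horder : orderOf α = q ^ m - 1 := by
    rw [orderOf_eq_card_of_forall_mem_zpowers hα, Nat.card_units,
      Nat.card_eq_fintype_card, hL]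
  have hdvd1 : q - 1 ∣ q ^ m - 1 := by
    simpa using Nat.sub_dvd_pow_sub_pow q 1 m
  have hQq : Q * (q - 1) = q ^ m - 1 := by rw [hQ]; exact Nat.div_mul_cancel hdvd1
  have hN' : N ∣ orderOf α := horder ▸ hN
  have hN0 : N ≠ 0 := by
    rintro rfl
    have := Nat.eq_zero_of_zero_dvd hN
    omega
  have hq1pos : 0 < q - 1 := by omega
  have ht : 1 < t := hT ▸ Fintype.one_lt_card
  have htq : t - 1 ∣ q - 1 := by
    have h1 : Nat.card Tˣ ∣ Nat.card Kˣ :=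
      Subgroup.card_dvd_of_injective (Units.map (algebraMap T K : T →+* K).toMonoidHom)
        (Units.map_injective (algebraMap T K).injective)
    rw [Nat.card_units, Nat.card_units, Nat.card_eq_fintype_card,
      Nat.card_eq_fintype_card, hT, hK] at h1
    exact h1
  have hnT : ∃ e : ℕ, 0 < e ∧ orderOf α = Q * e ∧ (Fintype.card T - 1) ∣ e :=
    ⟨q - 1, hq1pos, by rw [horder, hQq], by rw [hT]; exact htq⟩
  have hnK : ∃ e : ℕ, 0 < e ∧ orderOf α = Q * e ∧ (Fintype.card K - 1) ∣ e :=
    ⟨q - 1, hq1pos, by rw [horder, hQq], by rw [hK]⟩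
  constructor
  · intro ct hct
    exact delta_formula p T L α hα N Q hN' hN0 hnT hrad ct hct
  · intro hne
    have hA := delta_formula p T L α hα N Q hN' hN0 hnT hrad 1 one_ne_zero
    have hB := delta_formula p K L α hα N Q hN' hN0 hnK hrad 1 one_ne_zero
    have hCT := sum_Zcount_split T L α hα N Q hN' hnT hrad 1 one_ne_zero
    have hCK := sum_Zcount_split K L α hα N Q hN' hnK hrad 1 one_ne_zero
    have hC0 : ∑ c : T, Zcount T L α N c = ∑ c : K, Zcount K L α N c := by
      rw [sum_Zcount, sum_Zcount]
    rw [hCT, hCK, hT, hK] at hC0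
    have hCc : (Zcount T L α N 0 : ℂ) + ((t : ℂ) - 1) * (Zcount T L α N 1 : ℂ)
        = (Zcount K L α N 0 : ℂ) + ((q : ℂ) - 1) * (Zcount K L α N 1 : ℂ) := by
      have hcast := congrArg (Nat.cast : ℕ → ℂ) hC0
      push_cast [Nat.cast_sub (show 1 ≤ t by omega), Nat.cast_sub (show 1 ≤ q by omega)]
        at hcast
      exact hcast
    have hqt : (q : ℂ) ≠ (t : ℂ) := by exact_mod_cast (Ne.symm hne)
    rw [eq_div_iff (sub_ne_zero.mpr hqt)]
    linear_combination (1 - (t : ℂ)) * hA + ((q : ℂ) - 1) * hB + hCc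
end

section
/- Let q be a power of a prime, m a positive integer, N a positive divisor of q^m - 1, and k an integer. Then Σ_{i=0}^{q-2} η_{Qi+k}^{(N,q^m)} = ((q - 1)·gcd(Q, N)/N)·η_k^{(gcd(Q,N), q^m)}, where Q = (q^m - 1)/(q - 1). -/
open scoped BigOperators
open scoped Classical

lemma card_cast_eq (M cc : ℕ) (hM : 0 < M) (r : ZMod M) :
    ((Finset.range (M * cc)).filter (fun i : ℕ => (i : ZMod M) = r)).card = cc := by
  haveI : NeZero M := ⟨hM.ne'⟩
  have h : ((Finset.range (M * cc)).filter (fun i : ℕ => (i : ZMod M) = r)).card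
      = (Finset.range cc).card := by
    apply Finset.card_nbij' (fun i => i / M) (fun j => M * j + r.val)
    · intro i hi
      simp only [Finset.mem_coe, Finset.mem_filter, Finset.mem_range] at hi ⊢
      exact Nat.div_lt_of_lt_mul hi.1
    · intro j hj
      simp only [Finset.mem_coe, Finset.mem_filter, Finset.mem_range] at hj ⊢
      have hv : r.val < M := ZMod.val_lt r
      constructor
      · nlinarith
      · push_cast
        simp [ZMod.natCast_self, ZMod.natCast_val, ZMod.cast_id]
    · intro i hi
      simp only [Finset.mem_coe, Finset.mem_filter, Finset.mem_range] at hi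
      have : (i : ZMod M).val = i % M := ZMod.val_natCast M i
      rw [hi.2] at this
      show M * (i / M) + r.val = i
      have h2 := Nat.div_add_mod i M
      omega
    · intro j hj
      simp only [Finset.mem_coe, Finset.mem_range] at hj
      have hv : r.val < M := ZMod.val_lt r
      show (M * j + r.val) / M = j
      rw [Nat.mul_add_div hM, Nat.div_eq_of_lt hv]
      omega
  simpa using h

lemma count_lemma (Q N g M cc : ℕ) (hgQ : g ∣ Q) (hgN : N = g * M) (hg0 : 0 < g) (hM0 : 0 < M)
    (hcop : Nat.Coprime (Q / g) M) (τ : ℤ) :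
    ((Finset.range (M * cc)).filter (fun i : ℕ => (N:ℤ) ∣ (τ - Q * i))).card
      = if (g:ℤ) ∣ τ then cc else 0 := by
  haveI : NeZero M := ⟨hM0.ne'⟩
  by_cases hgτ : (g:ℤ) ∣ τ
  · rw [if_pos hgτ]
    obtain ⟨σ, hσ⟩ := hgτ
    obtain ⟨Q', hQ'⟩ := hgQ
    have hQ'g : Q / g = Q' := by rw [hQ', Nat.mul_div_cancel_left _ hg0]
    rw [hQ'g] at hcop
    set u : (ZMod M)ˣ := ZMod.unitOfCoprime Q' hcop with hu
    have hucoe : (u : ZMod M) = (Q' : ZMod M) := rfl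
    have key : ∀ i : ℕ, ((N:ℤ) ∣ (τ - Q * i)) ↔
        ((i : ZMod M) = ((u⁻¹ : (ZMod M)ˣ) : ZMod M) * (σ : ZMod M)) := by
      intro i
      have h1 : τ - Q * i = (g:ℤ) * ((σ : ℤ) - Q' * i) := by
        rw [hσ, hQ']; push_cast; ring
      rw [h1, hgN]
      push_cast
      rw [mul_dvd_mul_iff_left (by exact_mod_cast hg0.ne' : (g:ℤ) ≠ 0)]
      rw [← ZMod.intCast_zmod_eq_zero_iff_dvd]
      push_cast
      rw [sub_eq_zero]
      rw [Units.eq_inv_mul_iff_mul_eq, hucoe]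
      exact eq_comm
    rw [Finset.filter_congr (fun i _ => key i)]
    exact card_cast_eq M cc hM0 _
  · rw [if_neg hgτ]
    rw [Finset.card_eq_zero, Finset.filter_eq_empty_iff]
    intro i _
    intro hdvd
    apply hgτ
    have h1 : (g:ℤ) ∣ (N:ℤ) := Int.natCast_dvd_natCast.mpr ⟨M, hgN⟩
    have h2 : (g:ℤ) ∣ (Q:ℤ) * i := by
      exact Dvd.dvd.mul_right (by exact_mod_cast hgQ) _
    have h3 : (g:ℤ) ∣ τ - Q * i := dvd_trans h1 hdvd
    have := dvd_add h3 h2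
    simpa using this

lemma mem_iff {G : Type*} [Group G] (a : G) (n d : ℕ) (hn : orderOf a = n)
    (hn0 : 0 < n) (hd : d ∣ n) (hd0 : 0 < d) (κ t : ℤ) :
    (∃ i : ℕ, a ^ t = a ^ κ * (a ^ d) ^ i) ↔ (d:ℤ) ∣ (t - κ) := by
  constructor
  · rintro ⟨i, hi⟩
    have h2 : (a ^ d) ^ i = a ^ ((d:ℤ) * i) := by
      rw [← zpow_natCast (a ^ d) i, ← zpow_natCast a d, ← zpow_mul]
    have h1 : a ^ (t - (κ + (d:ℤ)*i)) = 1 := by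
      rw [zpow_sub, zpow_add, hi, h2]
      group
    have h5 : (n:ℤ) ∣ (t - (κ + (d:ℤ)*i)) := by
      rw [← hn]
      exact orderOf_dvd_iff_zpow_eq_one.mpr h1
    have hdn : (d:ℤ) ∣ (n:ℤ) := Int.natCast_dvd_natCast.mpr hd
    have h7 : (d:ℤ) ∣ t - (κ + (d:ℤ)*i) := hdn.trans h5
    have h6 : t - κ = (t - (κ + (d:ℤ)*i)) + (d:ℤ)*i := by ring
    rw [h6]
    exact dvd_add h7 (dvd_mul_right _ _)
  · rintro ⟨j, hj⟩
    have he0 : 0 < n / d := Nat.div_pos (Nat.le_of_dvd hn0 hd) hd0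
    set e : ℤ := ((n / d : ℕ) : ℤ) with hee
    have he0' : e ≠ 0 := by simp [hee]; omega
    have hde : (d:ℤ) * e = (n:ℤ) := by
      rw [hee]
      exact_mod_cast congrArg (fun x : ℕ => (x : ℤ)) (Nat.mul_div_cancel' hd)
    refine ⟨(j % e).toNat, ?_⟩
    have hi' : (((j % e).toNat : ℤ)) = j % e := Int.toNat_of_nonneg (Int.emod_nonneg j he0')
    have h2 : (a ^ d) ^ (j % e).toNat = a ^ ((d:ℤ) * (j % e)) := by
      rw [← zpow_natCast (a ^ d) ((j % e).toNat), ← zpow_natCast a d, ← zpow_mul, hi']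
    have h3 : t = κ + (d:ℤ) * (j % e) + (n:ℤ) * (j / e) := by
      have hdm := Int.mul_ediv_add_emod j e
      linear_combination hj - (d:ℤ) * hdm + (j / e) * hde
    have h4 : a ^ ((n:ℤ) * (j / e)) = 1 := by
      rw [zpow_mul, zpow_natCast, ← hn, pow_orderOf_eq_one, one_zpow]
    rw [h3, zpow_add, zpow_add, h4, mul_one, h2]

/-- Ding–Yang sum of Gaussian periods. -/
theorem stmt_11 (p s m q Q N : ℕ) (k : ℤ) [Fact p.Prime] (hs : 0 < s) (hm : 0 < m)
    (hq : q = p ^ s) (hQ : Q = (q ^ m - 1) / (q - 1))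
    (L : Type) [Field L] [Fintype L] [CharP L p] (hL : Fintype.card L = q ^ m)
    (α : Lˣ) (hα : ∀ x : Lˣ, x ∈ Subgroup.zpowers α)
    (hN : N ∣ q ^ m - 1) :
    ∑ i ∈ Finset.range (q - 1), gaussPeriod p L α N (((Q * i : ℕ) : ℤ) + k) =
      (((q : ℂ) - 1) * (Nat.gcd Q N : ℂ) / (N : ℂ)) *
        gaussPeriod p L α (Nat.gcd Q N) k := by
  classical
  have hp : p.Prime := Fact.out
  have hq2 : 2 ≤ q := by
    rw [hq]; exact hp.two_le.trans (Nat.le_self_pow hs.ne' p)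
  set n := q ^ m - 1 with hn
  have hqm2 : 2 ≤ q ^ m := hq2.trans (Nat.le_self_pow hm.ne' q)
  have hn0 : 0 < n := by omega
  have hcardL : Fintype.card Lˣ = n := by rw [Fintype.card_units, hL]
  have horder : orderOf α = n := by
    have h := orderOf_eq_card_of_forall_mem_zpowers hα
    rwa [Nat.card_eq_fintype_card, hcardL] at h
  have hN0 : 0 < N := Nat.pos_of_dvd_of_pos hN hn0
  have hq1d : (q - 1) ∣ n := by
    have := Nat.sub_dvd_pow_sub_pow q 1 m
    simpa using this
  have hQq : Q * (q - 1) = n := by rw [hQ]; exact Nat.div_mul_cancel hq1d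
  have hQ0 : 0 < Q := by
    rcases Nat.eq_zero_or_pos Q with h | h
    · rw [h, zero_mul] at hQq; omega
    · exact h
  set g := Nat.gcd Q N with hg
  have hg0 : 0 < g := Nat.gcd_pos_of_pos_left N hQ0
  have hgQ : g ∣ Q := Nat.gcd_dvd_left _ _
  have hgN : g ∣ N := Nat.gcd_dvd_right _ _
  set M := N / g with hM
  have hNgM : N = g * M := (Nat.mul_div_cancel' hgN).symm
  have hM0 : 0 < M := by
    rcases Nat.eq_zero_or_pos M with h | h
    · rw [h, mul_zero] at hNgM; omega
    · exact h
  have hcop : Nat.Coprime (Q / g) M := Nat.coprime_div_gcd_div_gcd hg0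
  have hMq : M ∣ (q - 1) := by
    have h1 : N ∣ Q * (q - 1) := hQq ▸ hN
    have h2 : g * M ∣ g * ((Q / g) * (q - 1)) := by
      rw [← hNgM, ← mul_assoc, Nat.mul_div_cancel' hgQ]; exact h1
    have h3 : M ∣ (Q / g) * (q - 1) := (Nat.mul_dvd_mul_iff_left hg0).mp h2
    exact Nat.Coprime.dvd_of_dvd_mul_left hcop.symm h3
  set cc := (q - 1) / M with hcc
  have hMcc : M * cc = q - 1 := Nat.mul_div_cancel' hMq
  have hlog : ∀ x : Lˣ, ∃ t : ℤ, α ^ t = x := fun x => Subgroup.mem_zpowers_iff.mp (hα x)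
  choose tl htl using hlog
  have hGP : ∀ (d : ℕ), d ∣ n → 0 < d → ∀ κ : ℤ,
      gaussPeriod p L α d κ =
        ∑ x ∈ Finset.univ.filter (fun x : Lˣ => (d:ℤ) ∣ (tl x - κ)), canChar p L (x : L) := by
    intro d hd hd0 κ
    unfold gaussPeriod
    congr 1
    apply Finset.filter_congr
    intro x _
    have h := mem_iff α n d horder hn0 hd hd0 κ (tl x)
    rw [htl x] at h
    exact h
  have hL1 : ∀ i : ℕ, gaussPeriod p L α N (((Q * i : ℕ) : ℤ) + k) =
      ∑ x : Lˣ, if (N:ℤ) ∣ ((tl x - k) - (Q:ℤ) * i) then canChar p L (x : L) else 0 := by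
    intro i
    rw [hGP N hN hN0 _, Finset.sum_filter]
    apply Finset.sum_congr rfl
    intro x _
    rw [show (tl x - (((Q * i : ℕ) : ℤ) + k)) = ((tl x - k) - (Q:ℤ) * i) from by
      push_cast; ring]
  calc ∑ i ∈ Finset.range (q - 1), gaussPeriod p L α N (((Q * i : ℕ) : ℤ) + k)
      = ∑ i ∈ Finset.range (q - 1), ∑ x : Lˣ,
          if (N:ℤ) ∣ ((tl x - k) - (Q:ℤ) * i) then canChar p L (x : L) else 0 :=
        Finset.sum_congr rfl (fun i _ => hL1 i)
    _ = ∑ x : Lˣ, ∑ i ∈ Finset.range (q - 1),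
          if (N:ℤ) ∣ ((tl x - k) - (Q:ℤ) * i) then canChar p L (x : L) else 0 :=
        Finset.sum_comm
    _ = ∑ x : Lˣ, ((((Finset.range (M * cc)).filter
          (fun i : ℕ => (N:ℤ) ∣ ((tl x - k) - (Q:ℤ) * i))).card : ℂ)) * canChar p L (x : L) := by
        refine Finset.sum_congr rfl fun x _ => ?_
        rw [hMcc, ← Finset.sum_filter, Finset.sum_const, nsmul_eq_mul]
    _ = ∑ x : Lˣ, (if (g:ℤ) ∣ (tl x - k) then (cc:ℂ) else 0) * canChar p L (x : L) := by
        refine Finset.sum_congr rfl fun x _ => ?_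
        rw [count_lemma Q N g M cc hgQ hNgM hg0 hM0 hcop (tl x - k)]
        push_cast [apply_ite (fun r : ℕ => (r : ℂ))]
        rfl
    _ = (cc:ℂ) * gaussPeriod p L α g k := by
        rw [hGP g (hgN.trans hN) hg0 k, Finset.sum_filter, Finset.mul_sum]
        refine Finset.sum_congr rfl fun x _ => ?_
        split_ifs <;> ring
    _ = (((q : ℂ) - 1) * (g : ℂ) / (N : ℂ)) * gaussPeriod p L α g k := by
        have hq1c : ((q : ℂ) - 1) = ((q - 1 : ℕ) : ℂ) := by
          rw [Nat.cast_sub (by omega : 1 ≤ q)]; norm_num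
        have hNat : (q - 1) * g = cc * N := by rw [← hMcc, hNgM]; ring
        have hN' : (N:ℂ) ≠ 0 := Nat.cast_ne_zero.mpr hN0.ne'
        congr 1
        rw [hq1c, eq_div_iff hN']
        exact_mod_cast hNat.symm
end

section
/- Let q be a power of a prime, m a positive integer, N a positive divisor of q^m - 1, and k an integer. Then the following three identities hold: (i) Δ_{Nk}(N) = Δ_0(N); (ii) Σ_{i=0}^{N-1} Δ_i(N) = -φ(N); (iii) Δ_k(N) = Σ_{i=1}^{q^m-1, gcd(N, i-k)=1} χ_{q^m}(α^i), where the sum is over those i ∈ {1, ..., q^m - 1} with gcd(N, i - k) = 1. -/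
open scoped BigOperators
open scoped Classical

section Aux

open Finset

lemma aux_exists_pow {G : Type} [Group G] [Fintype G] (g : G) (t : ℤ) :
    ∃ j : ℕ, g ^ t = g ^ j := by
  refine ⟨(t % (orderOf g : ℤ)).toNat, ?_⟩
  have h0 : (0 : ℤ) < (orderOf g : ℤ) := by exact_mod_cast orderOf_pos g
  rw [← zpow_natCast, Int.toNat_of_nonneg (Int.emod_nonneg t h0.ne'), zpow_mod_orderOf]

lemma aux_gcd_dvd {n a b : ℤ} (h : Int.ModEq n a b) : Int.gcd n a ∣ Int.gcd n b := by
  have d1 : (Int.gcd n a : ℤ) ∣ n := Int.gcd_dvd_left n a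
  have d2 : (Int.gcd n a : ℤ) ∣ a := Int.gcd_dvd_right n a
  have d3 : (Int.gcd n a : ℤ) ∣ b := by
    have h4 := (d1.trans h.dvd).add d2
    simpa using h4
  exact_mod_cast Int.dvd_gcd d1 d3

lemma aux_gcd_modEq {n a b : ℤ} (h : Int.ModEq n a b) : Int.gcd n a = Int.gcd n b :=
  Nat.dvd_antisymm (aux_gcd_dvd h) (aux_gcd_dvd h.symm)

lemma aux_emod_modEq (n a : ℤ) : Int.ModEq n (a % n) a := by
  show a % n % n = a % n
  exact Int.emod_emod_of_dvd a dvd_rfl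

lemma aux_sum_canChar (p : ℕ) [hp : Fact p.Prime] (L : Type) [Field L] [Fintype L]
    [CharP L p] : ∑ z : L, canChar p L z = 0 := by
  have hpr : ringChar L = p := ringChar.eq L p
  subst hpr
  haveI : NeZero (ringChar L) := ⟨hp.out.ne_zero⟩
  letI : Algebra (ZMod (ringChar L)) L := ZMod.algebra L (ringChar L)
  have hne : ((ringChar L : ℂ)) ≠ 0 := Nat.cast_ne_zero.mpr hp.out.ne_zero
  set ζ : ℂ := Complex.exp (2 * Real.pi * Complex.I / (ringChar L)) with hζdef
  have hζ : ζ ^ (ringChar L) = 1 := by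
    rw [hζdef, ← Complex.exp_nat_mul, mul_div_cancel₀ _ hne, Complex.exp_two_pi_mul_I]
  set χ : AddChar L ℂ :=
    (AddChar.zmodChar (ringChar L) hζ).compAddMonoidHom
      (Algebra.trace (ZMod (ringChar L)) L).toAddMonoidHom with hχdef
  have hcc : ∀ z : L, canChar (ringChar L) L z = χ z := by
    intro z
    rw [hχdef]
    simp only [AddChar.compAddMonoidHom_apply, LinearMap.toAddMonoidHom_coe,
      AddChar.zmodChar_apply, canChar]
    rw [hζdef, ← Complex.exp_nat_mul]
    congr 1
    ring
  have hprim : IsPrimitiveRoot ζ (ringChar L) := by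
    rw [hζdef]
    exact Complex.isPrimitiveRoot_exp _ hp.out.ne_zero
  have hne1 : χ ≠ 1 := by
    rw [AddChar.ne_one_iff]
    obtain ⟨a, ha⟩ := FiniteField.trace_to_zmod_nondegenerate L (one_ne_zero (α := L))
    rw [one_mul] at ha
    refine ⟨a, ?_⟩
    rw [hχdef]
    simp only [AddChar.compAddMonoidHom_apply, LinearMap.toAddMonoidHom_coe,
      AddChar.zmodChar_apply]
    apply hprim.pow_ne_one_of_pos_of_lt
    · exact (fun h => ha ((ZMod.val_eq_zero _).mp h))
    · exact ZMod.val_lt _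
  calc ∑ z : L, canChar (ringChar L) L z = ∑ z : L, χ z :=
        Finset.sum_congr rfl fun z _ => hcc z
    _ = 0 := AddChar.sum_eq_zero_of_ne_one hne1

lemma aux_canChar_zero (p : ℕ) [hp : Fact p.Prime] (L : Type) [Field L] [Fintype L]
    [CharP L p] : canChar p L 0 = 1 := by
  haveI : NeZero p := ⟨hp.out.ne_zero⟩
  simp [canChar]

lemma aux_sum_units (p : ℕ) [Fact p.Prime] (L : Type) [Field L] [Fintype L] [CharP L p] :
    ∑ x : Lˣ, canChar p L (x : L) = -1 := by
  have hbij : ∑ x : Lˣ, canChar p L (x : L)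
      = ∑ z ∈ Finset.univ.erase (0 : L), canChar p L z := by
    apply Finset.sum_bij (fun (x : Lˣ) _ => (x : L))
    · intro x _; exact Finset.mem_erase.mpr ⟨x.ne_zero, Finset.mem_univ _⟩
    · intro x _ y _ h; exact Units.ext h
    · intro z hz
      exact ⟨Units.mk0 z (Finset.mem_erase.mp hz).1, Finset.mem_univ _, rfl⟩
    · intros; rfl
  have h2 : canChar p L 0 + ∑ z ∈ Finset.univ.erase (0 : L), canChar p L z
      = ∑ z : L, canChar p L z := Finset.add_sum_erase _ _ (Finset.mem_univ 0)
  rw [aux_sum_canChar p L, aux_canChar_zero p L] at h2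
  rw [hbij]
  linear_combination h2

lemma aux_gaussPeriod_eq (p : ℕ) [Fact p.Prime] (L : Type) [Field L] [Fintype L] [CharP L p]
    (α : Lˣ) (n : ℕ) (hn : 0 < n) (hord : orderOf α = n)
    (d : ℕ) (hd : d ∣ n) (k : ℤ) :
    gaussPeriod p L α d k =
      ∑ i ∈ (Finset.Icc 1 n).filter (fun i : ℕ => (d : ℤ) ∣ (i : ℤ) - k),
        canChar p L ((α ^ i : Lˣ) : L) := by
  rw [gaussPeriod]
  refine (Finset.sum_bij (fun i _ => (α ^ i : Lˣ)) ?_ ?_ ?_ ?_).symm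
  · intro i hi
    simp only [Finset.mem_filter, Finset.mem_Icc] at hi
    obtain ⟨⟨h1, h2⟩, t, ht⟩ := hi
    simp only [Finset.mem_filter, Finset.mem_univ, true_and]
    have hik : (i : ℤ) = k + (d : ℤ) * t := by omega
    have key : (α ^ i : Lˣ) = α ^ k * (α ^ d) ^ (t : ℤ) := by
      calc (α ^ i : Lˣ) = α ^ ((i : ℕ) : ℤ) := (zpow_natCast α i).symm
        _ = α ^ (k + (d : ℤ) * t) := by rw [hik]
        _ = α ^ k * (α ^ ((d : ℕ) : ℤ)) ^ t := by rw [zpow_add, zpow_mul]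
        _ = α ^ k * (α ^ d) ^ (t : ℤ) := by rw [zpow_natCast]
    obtain ⟨j, hj⟩ := aux_exists_pow (α ^ d) t
    exact ⟨j, by rw [key, hj]⟩
  · intro i hi i' hi' h
    simp only [Finset.mem_filter, Finset.mem_Icc] at hi hi'
    have hmod : i ≡ i' [MOD n] := by rw [← hord]; exact pow_eq_pow_iff_modEq.mp h
    rcases le_total i i' with hle | hle
    · have hdvd : n ∣ i' - i := (Nat.modEq_iff_dvd' hle).mp hmod
      have h0 : i' - i = 0 := Nat.eq_zero_of_dvd_of_lt hdvd (by omega)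
      omega
    · have hdvd : n ∣ i - i' := (Nat.modEq_iff_dvd' hle).mp hmod.symm
      have h0 : i - i' = 0 := Nat.eq_zero_of_dvd_of_lt hdvd (by omega)
      omega
  · intro x hx
    simp only [Finset.mem_filter, Finset.mem_univ, true_and] at hx
    obtain ⟨j, hj⟩ := hx
    set e : ℤ := k + (d : ℤ) * j with he
    have hx2 : α ^ e = x := by
      rw [hj, he, zpow_add, zpow_mul, zpow_natCast, zpow_natCast]
    have hnz : (0 : ℤ) < (n : ℤ) := by exact_mod_cast hn
    set r : ℤ := e % (n : ℤ) with hr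
    have hr0 : 0 ≤ r := Int.emod_nonneg e hnz.ne'
    have hrn : r < (n : ℤ) := Int.emod_lt_of_pos e hnz
    obtain ⟨i₀, hmem1, hmem2, hie⟩ :
        ∃ i₀ : ℕ, 1 ≤ i₀ ∧ i₀ ≤ n ∧ (n : ℤ) ∣ (i₀ : ℤ) - e := by
      rcases eq_or_ne r 0 with h0 | h0
      · refine ⟨n, hn, le_refl n, ?_⟩
        have he' : (n : ℤ) ∣ e := Int.dvd_of_emod_eq_zero (by rw [← hr]; exact h0)
        exact dvd_sub (dvd_refl _) he'
      · refine ⟨r.toNat, by omega, by omega, ?_⟩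
        rw [Int.toNat_of_nonneg hr0, hr, Int.emod_def]
        exact ⟨-(e / (n : ℤ)), by ring⟩
    refine ⟨i₀, ?_, ?_⟩
    · simp only [Finset.mem_filter, Finset.mem_Icc]
      refine ⟨⟨hmem1, hmem2⟩, ?_⟩
      have hd1 : (d : ℤ) ∣ (i₀ : ℤ) - e := dvd_trans (Int.natCast_dvd_natCast.mpr hd) hie
      have hd2 : (d : ℤ) ∣ e - k := ⟨j, by rw [he]; ring⟩
      have h3 := hd1.add hd2
      simpa using h3
    · have hmodeq : α ^ ((i₀ : ℕ) : ℤ) = α ^ e := by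
        rw [zpow_eq_zpow_iff_modEq, hord]
        have h' : (n : ℤ) ∣ e - (i₀ : ℤ) := by
          have h5 := dvd_neg.mpr hie
          rwa [neg_sub] at h5
        exact Int.modEq_iff_dvd.mpr h'
      calc (α ^ i₀ : Lˣ) = α ^ ((i₀ : ℕ) : ℤ) := (zpow_natCast α i₀).symm
        _ = α ^ e := hmodeq
        _ = x := hx2
  · intros; rfl

lemma aux_moebius_sum (N : ℕ) (hN : N ≠ 0) (x : ℤ) :
    (∑ d ∈ N.divisors.filter (fun d : ℕ => (d : ℤ) ∣ x),
        ((ArithmeticFunction.moebius d : ℤ) : ℂ)) =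
      if Int.gcd (N : ℤ) x = 1 then 1 else 0 := by
  have hg : Int.gcd (N : ℤ) x = Nat.gcd N x.natAbs := by
    simp [Int.gcd, Int.natAbs_natCast]
  have hset : N.divisors.filter (fun d : ℕ => (d : ℤ) ∣ x) = (Int.gcd (N : ℤ) x).divisors := by
    ext d
    simp only [Finset.mem_filter, Nat.mem_divisors, hg]
    constructor
    · rintro ⟨⟨h1, -⟩, h2⟩
      refine ⟨Nat.dvd_gcd h1 (Int.natCast_dvd.mp h2), ?_⟩
      intro h
      exact hN (Nat.eq_zero_of_gcd_eq_zero_left h)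
    · rintro ⟨h1, -⟩
      exact ⟨⟨h1.trans (Nat.gcd_dvd_left _ _), hN⟩,
        Int.natCast_dvd.mpr (h1.trans (Nat.gcd_dvd_right _ _))⟩
  have key : (∑ d ∈ (Int.gcd (N : ℤ) x).divisors, ArithmeticFunction.moebius d)
      = if Int.gcd (N : ℤ) x = 1 then 1 else 0 := by
    have h1 := ArithmeticFunction.coe_mul_zeta_apply
      (f := ArithmeticFunction.moebius) (x := Int.gcd (N : ℤ) x)
    rw [ArithmeticFunction.moebius_mul_coe_zeta, ArithmeticFunction.one_apply] at h1
    exact h1.symm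
  rw [hset]
  have h2 : (∑ d ∈ (Int.gcd (N : ℤ) x).divisors, ((ArithmeticFunction.moebius d : ℤ) : ℂ))
      = (((∑ d ∈ (Int.gcd (N : ℤ) x).divisors, ArithmeticFunction.moebius d : ℤ)) : ℂ) := by
    push_cast
    rfl
  rw [h2, key]
  split <;> simp

lemma aux_Delta_eq (p : ℕ) [Fact p.Prime] (L : Type) [Field L] [Fintype L] [CharP L p]
    (α : Lˣ) (n N : ℕ) (hn : 0 < n) (hord : orderOf α = n) (hNn : N ∣ n) (hN : N ≠ 0)
    (k : ℤ) :
    DeltaSum p L α N k =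
      ∑ i ∈ (Finset.Icc 1 n).filter (fun i : ℕ => Int.gcd (N : ℤ) ((i : ℤ) - k) = 1),
        canChar p L ((α ^ i : Lˣ) : L) := by
  rw [DeltaSum]
  have h1 : ∀ d ∈ N.divisors,
      ((ArithmeticFunction.moebius d : ℤ) : ℂ) * gaussPeriod p L α d k
        = ∑ i ∈ Finset.Icc 1 n,
            if (d : ℤ) ∣ (i : ℤ) - k then
              ((ArithmeticFunction.moebius d : ℤ) : ℂ) * canChar p L ((α ^ i : Lˣ) : L)
            else 0 := by
    intro d hd
    rw [aux_gaussPeriod_eq p L α n hn hord d ((Nat.mem_divisors.mp hd).1.trans hNn) k,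
      Finset.mul_sum, Finset.sum_filter]
  rw [Finset.sum_congr rfl h1, Finset.sum_comm]
  conv_rhs => rw [Finset.sum_filter]
  refine Finset.sum_congr rfl fun i _ => ?_
  have h2 : (∑ d ∈ N.divisors.filter (fun d : ℕ => (d : ℤ) ∣ (i : ℤ) - k),
        ((ArithmeticFunction.moebius d : ℤ) : ℂ)) * canChar p L ((α ^ i : Lˣ) : L)
      = ∑ d ∈ N.divisors,
          if (d : ℤ) ∣ (i : ℤ) - k then
            ((ArithmeticFunction.moebius d : ℤ) : ℂ) * canChar p L ((α ^ i : Lˣ) : L)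
          else 0 := by
    rw [Finset.sum_mul, Finset.sum_filter]
  rw [← h2, aux_moebius_sum N hN ((i : ℤ) - k), ite_mul, one_mul, zero_mul]

lemma aux_count (N : ℕ) (hN : 0 < N) (z : ℤ) :
    ((Finset.range N).filter (fun k' : ℕ => Int.gcd (N : ℤ) (z - (k' : ℤ)) = 1)).card
      = N.totient := by
  rw [Nat.totient_eq_card_coprime]
  have hNz : (0 : ℤ) < (N : ℤ) := by exact_mod_cast hN
  refine Finset.card_bij (fun k' _ => ((z - (k' : ℤ)) % (N : ℤ)).toNat) ?_ ?_ ?_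
  · intro k' hk'
    simp only [Finset.mem_filter, Finset.mem_range] at hk' ⊢
    have hr0 : 0 ≤ (z - (k' : ℤ)) % (N : ℤ) := Int.emod_nonneg _ hNz.ne'
    have hrn : (z - (k' : ℤ)) % (N : ℤ) < (N : ℤ) := Int.emod_lt_of_pos _ hNz
    refine ⟨by omega, ?_⟩
    have hgcd : Int.gcd (N : ℤ) (((z - (k' : ℤ)) % (N : ℤ)).toNat : ℤ)
        = Int.gcd (N : ℤ) (z - (k' : ℤ)) := by
      rw [Int.toNat_of_nonneg hr0]
      exact aux_gcd_modEq (aux_emod_modEq _ _)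
    have := hk'.2
    unfold Nat.Coprime
    rw [← Int.gcd_natCast_natCast, hgcd]
    exact this
  · intro k1 h1 k2 h2 heq
    simp only [Finset.mem_filter, Finset.mem_range] at h1 h2
    have hr1 : 0 ≤ (z - (k1 : ℤ)) % (N : ℤ) := Int.emod_nonneg _ hNz.ne'
    have hr2 : 0 ≤ (z - (k2 : ℤ)) % (N : ℤ) := Int.emod_nonneg _ hNz.ne'
    have heq' : (z - (k1 : ℤ)) % (N : ℤ) = (z - (k2 : ℤ)) % (N : ℤ) := by omega
    have hdvd : (N : ℤ) ∣ (k1 : ℤ) - (k2 : ℤ) := by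
      have h3 : Int.ModEq (N : ℤ) (z - (k1 : ℤ)) (z - (k2 : ℤ)) := heq'
      have h4 := h3.dvd
      have h5 : (z - (k2 : ℤ)) - (z - (k1 : ℤ)) = (k1 : ℤ) - (k2 : ℤ) := by ring
      rwa [h5] at h4
    have habs : |(k1 : ℤ) - (k2 : ℤ)| < (N : ℤ) :=
      abs_sub_lt_iff.mpr ⟨by omega, by omega⟩
    have h0 := Int.eq_zero_of_abs_lt_dvd hdvd habs
    omega
  · intro r hr
    simp only [Finset.mem_filter, Finset.mem_range] at hr
    obtain ⟨hrN, hrcop⟩ := hr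
    have hk0 : 0 ≤ (z - (r : ℤ)) % (N : ℤ) := Int.emod_nonneg _ hNz.ne'
    have hkN : (z - (r : ℤ)) % (N : ℤ) < (N : ℤ) := Int.emod_lt_of_pos _ hNz
    set k' : ℕ := ((z - (r : ℤ)) % (N : ℤ)).toNat with hk'
    have hk'cast : (k' : ℤ) = (z - (r : ℤ)) % (N : ℤ) := by
      rw [hk']; exact Int.toNat_of_nonneg hk0
    have hmodeq : Int.ModEq (N : ℤ) (z - (k' : ℤ)) (r : ℤ) := by
      have h6 : Int.ModEq (N : ℤ) ((k' : ℤ)) (z - (r : ℤ)) := by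
        rw [hk'cast]; exact aux_emod_modEq _ _
      have h7 := (Int.ModEq.refl z).sub h6
      have h8 : z - (z - (r : ℤ)) = (r : ℤ) := by ring
      rwa [h8] at h7
    have hgcd : Int.gcd (N : ℤ) (z - (k' : ℤ)) = 1 := by
      rw [aux_gcd_modEq hmodeq, Int.gcd_natCast_natCast]
      exact hrcop
    refine ⟨k', ?_, ?_⟩
    · simp only [Finset.mem_filter, Finset.mem_range]
      exact ⟨by omega, hgcd⟩
    · have h9 : (z - (k' : ℤ)) % (N : ℤ) = (r : ℤ) := by
        have := hmodeq
        show _ = (r : ℤ)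
        calc (z - (k' : ℤ)) % (N : ℤ) = (r : ℤ) % (N : ℤ) := hmodeq
          _ = (r : ℤ) := Int.emod_eq_of_lt (by omega) (by omega)
      show ((z - (k' : ℤ)) % (N : ℤ)).toNat = r
      rw [h9]
      omega

end Aux

/-- basic identities for `Δ_k(N)`. -/
theorem stmt_12 (p s m q N : ℕ) (k : ℤ) [Fact p.Prime] (hs : 0 < s) (hm : 0 < m)
    (hq : q = p ^ s)
    (L : Type) [Field L] [Fintype L] [CharP L p] (hL : Fintype.card L = q ^ m)
    (α : Lˣ) (hα : ∀ x : Lˣ, x ∈ Subgroup.zpowers α)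
    (hN : N ∣ q ^ m - 1) :
    DeltaSum p L α N ((N : ℤ) * k) = DeltaSum p L α N 0 ∧
    (∑ i ∈ Finset.range N, DeltaSum p L α N (i : ℤ)) = -(Nat.totient N : ℂ) ∧
    DeltaSum p L α N k =
      ∑ i ∈ (Finset.Icc 1 (q ^ m - 1)).filter
          (fun i => Int.gcd (N : ℤ) ((i : ℤ) - k) = 1),
        canChar p L ((α ^ i : Lˣ) : L) := by
  have hp : p.Prime := Fact.out
  set n : ℕ := q ^ m - 1 with hn_def
  have hq2 : 1 < q := by rw [hq]; exact Nat.one_lt_pow hs.ne' hp.one_lt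
  have hqm : 1 < q ^ m := Nat.one_lt_pow hm.ne' hq2
  have hn : 0 < n := by omega
  have hNpos : 0 < N := by
    rcases Nat.eq_zero_or_pos N with h | h
    · exfalso
      rw [h] at hN
      have := Nat.eq_zero_of_zero_dvd hN
      omega
    · exact h
  have hord : orderOf α = n := by
    rw [orderOf_eq_card_of_forall_mem_zpowers hα, Nat.card_units,
      Nat.card_eq_fintype_card, hL]
  have hDelta : ∀ k' : ℤ, DeltaSum p L α N k' =
      ∑ i ∈ (Finset.Icc 1 n).filter (fun i : ℕ => Int.gcd (N : ℤ) ((i : ℤ) - k') = 1),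
        canChar p L ((α ^ i : Lˣ) : L) :=
    fun k' => aux_Delta_eq p L α n N hn hord hN hNpos.ne' k'
  refine ⟨?_, ?_, ?_⟩
  · rw [hDelta ((N : ℤ) * k), hDelta 0]
    apply Finset.sum_congr _ (fun _ _ => rfl)
    apply Finset.filter_congr
    intro i _
    have hgcd : Int.gcd (N : ℤ) ((i : ℤ) - (N : ℤ) * k) = Int.gcd (N : ℤ) ((i : ℤ) - 0) := by
      rw [sub_zero]
      exact aux_gcd_modEq (Int.modEq_iff_dvd.mpr ⟨k, by ring⟩)
    simp [hgcd]
  · -- sum over k' of Delta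
    have hall : ∑ i ∈ Finset.Icc 1 n, canChar p L ((α ^ i : Lˣ) : L) = -1 := by
      have h1 := aux_gaussPeriod_eq p L α n hn hord 1 (one_dvd n) 0
      rw [show (Finset.Icc 1 n).filter (fun i : ℕ => (((1:ℕ)):ℤ) ∣ (i:ℤ) - 0) = Finset.Icc 1 n from
        Finset.filter_true_of_mem (fun i _ => one_dvd _)] at h1
      rw [← h1, gaussPeriod, Finset.filter_true_of_mem]
      · exact aux_sum_units p L
      · intro x _
        obtain ⟨t, ht⟩ := Subgroup.mem_zpowers_iff.mp (hα x)
        obtain ⟨j, hj⟩ := aux_exists_pow α t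
        refine ⟨j, ?_⟩
        rw [zpow_zero, one_mul, pow_one, ← hj, ht]
    calc ∑ i ∈ Finset.range N, DeltaSum p L α N (i : ℤ)
        = ∑ k' ∈ Finset.range N, ∑ i ∈ Finset.Icc 1 n,
            if Int.gcd (N : ℤ) ((i : ℤ) - (k' : ℤ)) = 1 then
              canChar p L ((α ^ i : Lˣ) : L) else 0 := by
          refine Finset.sum_congr rfl fun k' _ => ?_
          rw [hDelta (k' : ℤ), Finset.sum_filter]
      _ = ∑ i ∈ Finset.Icc 1 n, ∑ k' ∈ Finset.range N,
            if Int.gcd (N : ℤ) ((i : ℤ) - (k' : ℤ)) = 1 then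
              canChar p L ((α ^ i : Lˣ) : L) else 0 := Finset.sum_comm
      _ = ∑ i ∈ Finset.Icc 1 n, (N.totient : ℂ) * canChar p L ((α ^ i : Lˣ) : L) := by
          refine Finset.sum_congr rfl fun i _ => ?_
          rw [← Finset.sum_filter, Finset.sum_const, aux_count N hNpos (i : ℤ),
            nsmul_eq_mul]
      _ = (N.totient : ℂ) * ∑ i ∈ Finset.Icc 1 n, canChar p L ((α ^ i : Lˣ) : L) := by
          rw [Finset.mul_sum]
      _ = -(N.totient : ℂ) := by rw [hall]; ring
  · -- part (iii): convert the coerced ℤ-indexed sum to the ℕ-indexed one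
    rw [hDelta k]
    simp only [Finset.pure_def, Finset.bind_def, Finset.sup_singleton_apply]
    refine Finset.sum_bij (fun (i : ℕ) _ => (i : ℤ)) ?_ ?_ ?_ ?_
    · intro i hi
      simp only [Finset.mem_filter, Finset.mem_Icc] at hi
      simp only [Finset.mem_filter, Finset.mem_image]
      refine ⟨⟨i, ?_, rfl⟩, hi.2⟩
      simp only [Finset.mem_Icc]
      omega
    · intro i _ i' _ h
      exact Nat.cast_injective h
    · intro b hb
      simp only [Finset.mem_filter, Finset.mem_image, Finset.mem_Icc] at hb
      obtain ⟨⟨a, ha, rfl⟩, hgcd⟩ := hb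
      refine ⟨a, ?_, rfl⟩
      simp only [Finset.mem_filter, Finset.mem_Icc]
      exact ⟨ha, hgcd⟩
    · intro i hi
      rw [zpow_natCast]
end
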